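/- arXiv:1511.05886 — 5 statements merged into one kernel-verified Lean document; each statement's English description precedes it below -/
import Mathlib

section
/- Information-theoretic direct product theorem (Theorem 6, abstract form). Let Ω be a finite probability space, r ≥ 1 and b natural numbers, 𝒳₁,…,𝒳ᵣ finite types, and X_i : Ω → 𝒳_i random variables that are mutually independent. Let B : Ω → Fin (2^b) be any random variable, and for 1 ≤ i ≤ r set W_i = (X₁,…,X_{i−1}, B). Let cost_i : Ω → ℝ be nonnegative random variables. Suppose f : [0,∞) → ℝ is convex and nonincreasing and that for every i and every value w of W_i occurring with positive probability, E[cost_i | W_i = w] ≥ f( D_KL( law of X_i conditioned on W_i = w ‖ law of X_i ) ). Then E[Σ_{i=1}^r cost_i] ≥ r · f(b/r). -/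
open Classical

/-- Probability of an event under a finite probability mass function. -/
noncomputable def prOf {Ω : Type*} [Fintype Ω] (P : Ω → ℝ) (s : Ω → Prop) : ℝ :=
  ∑ ω, if s ω then P ω else 0

/-- Kullback–Leibler divergence in bits between two distributions on a finite type. -/
noncomputable def klBits {α : Type*} [Fintype α] (μ ν : α → ℝ) : ℝ :=
  ∑ x, μ x * Real.logb 2 (μ x / ν x)

section Aux
variable {Ω : Type*} [Fintype Ω]

lemma prOf_nonneg (P : Ω → ℝ) (hP0 : ∀ ω, 0 ≤ P ω) (s : Ω → Prop) : 0 ≤ prOf P s := by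
  refine Finset.sum_nonneg fun ω _ => ?_
  split <;> simp [hP0 ω]

lemma prOf_congr (P : Ω → ℝ) {s t : Ω → Prop} (h : ∀ ω, s ω ↔ t ω) : prOf P s = prOf P t := by
  unfold prOf
  refine Finset.sum_congr rfl fun ω _ => ?_
  by_cases hs : s ω
  · rw [if_pos hs, if_pos ((h ω).mp hs)]
  · rw [if_neg hs, if_neg (fun ht => hs ((h ω).mpr ht))]

lemma prOf_mono (P : Ω → ℝ) (hP0 : ∀ ω, 0 ≤ P ω) {s t : Ω → Prop} (h : ∀ ω, s ω → t ω) :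
    prOf P s ≤ prOf P t := by
  refine Finset.sum_le_sum fun ω _ => ?_
  by_cases hs : s ω
  · rw [if_pos hs, if_pos (h ω hs)]
  · rw [if_neg hs]; split <;> simp [hP0 ω]

lemma le_prOf (P : Ω → ℝ) (hP0 : ∀ ω, 0 ≤ P ω) {s : Ω → Prop} (ω₀ : Ω) (hω : s ω₀) :
    P ω₀ ≤ prOf P s := by
  have := Finset.single_le_sum (f := fun ω => if s ω then P ω else 0)
    (fun ω _ => by split <;> simp [hP0 ω]) (Finset.mem_univ ω₀)
  unfold prOf
  simpa [if_pos hω] using this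

lemma sum_prOf_mul {γ : Type*} [Fintype γ] (P : Ω → ℝ) (Z : Ω → γ) (g : γ → ℝ) :
    ∑ v, prOf P (fun ω => Z ω = v) * g v = ∑ ω, P ω * g (Z ω) := by
  unfold prOf
  simp only [Finset.sum_mul]
  rw [Finset.sum_comm]
  refine Finset.sum_congr rfl fun ω _ => ?_
  have : ∀ v, (if Z ω = v then P ω else 0) * g v = if Z ω = v then P ω * g v else 0 := by
    intro v; split <;> simp
  rw [Finset.sum_congr rfl (fun v _ => this v), Finset.sum_ite_eq]
  simp

lemma sum_prOf_eq_one (P : Ω → ℝ) (hP1 : ∑ ω, P ω = 1) {γ : Type*} [Fintype γ] (Z : Ω → γ) :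
    ∑ v, prOf P (fun ω => Z ω = v) = 1 := by
  have := sum_prOf_mul P Z (fun _ => 1)
  simpa [hP1] using this

lemma sum_prOf_and {γ : Type*} [Fintype γ] (P : Ω → ℝ) (Z : Ω → γ) (s : Ω → Prop) :
    ∑ v, prOf P (fun ω => Z ω = v ∧ s ω) = prOf P s := by
  have h1 : ∀ v, prOf P (fun ω => Z ω = v ∧ s ω)
      = ∑ ω, if Z ω = v then (if s ω then P ω else 0) else 0 := by
    intro v; unfold prOf; refine Finset.sum_congr rfl fun ω _ => ?_
    by_cases h1 : Z ω = v <;> by_cases h2 : s ω <;> simp [h1, h2]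
  rw [Finset.sum_congr rfl fun v _ => h1 v, Finset.sum_comm]
  refine Finset.sum_congr rfl fun ω _ => ?_
  rw [Finset.sum_ite_eq]
  simp [prOf]

lemma gibbs {γ : Type*} [Fintype γ] (μ ν : γ → ℝ)
    (hμ : ∀ x, 0 ≤ μ x) (hν : ∀ x, 0 ≤ ν x)
    (hsum : ∑ x, ν x ≤ ∑ x, μ x)
    (habs : ∀ x, ν x = 0 → μ x = 0) :
    ∑ x, μ x * Real.logb 2 (ν x / μ x) ≤ 0 := by
  have hlog2 : (0:ℝ) < Real.log 2 := Real.log_pos (by norm_num)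
  have step : ∀ x, μ x * Real.logb 2 (ν x / μ x) ≤ (ν x - μ x) / Real.log 2 := by
    intro x
    by_cases hx : μ x = 0
    · simp only [hx, zero_mul, sub_zero]
      exact div_nonneg (hν x) hlog2.le
    · have hμx : 0 < μ x := lt_of_le_of_ne (hμ x) (Ne.symm hx)
      have hνx : 0 < ν x := by
        rcases lt_or_eq_of_le (hν x) with h | h
        · exact h
        · exact absurd (habs x h.symm) hx
      have hpos : 0 < ν x / μ x := div_pos hνx hμx
      have hl := Real.log_le_sub_one_of_pos hpos
      have h2 : μ x * Real.log (ν x / μ x) ≤ ν x - μ x := by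
        calc μ x * Real.log (ν x / μ x) ≤ μ x * (ν x / μ x - 1) :=
              mul_le_mul_of_nonneg_left hl (hμ x)
          _ = ν x - μ x := by field_simp
      rw [Real.logb, ← mul_div_assoc]
      gcongr
  calc ∑ x, μ x * Real.logb 2 (ν x / μ x) ≤ ∑ x, (ν x - μ x) / Real.log 2 :=
        Finset.sum_le_sum fun x _ => step x
    _ = (∑ x, ν x - ∑ x, μ x) / Real.log 2 := by
        rw [← Finset.sum_div, Finset.sum_sub_distrib]
    _ ≤ 0 := div_nonpos_of_nonpos_of_nonneg (by linarith) hlog2.le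

end Aux

section NegH
variable {Ω : Type*} [Fintype Ω]

/-- Negative Shannon entropy (base 2), in outcome-sum form. -/
noncomputable def negH {γ : Type*} [Fintype γ] (P : Ω → ℝ) (Z : Ω → γ) : ℝ :=
  ∑ ω, P ω * Real.logb 2 (prOf P (fun ω' => Z ω' = Z ω))

lemma negH_congr {γ γ' : Type*} [Fintype γ] [Fintype γ'] (P : Ω → ℝ)
    (Z : Ω → γ) (Z' : Ω → γ')
    (h : ∀ ω' ω, Z ω' = Z ω ↔ Z' ω' = Z' ω) : negH P Z = negH P Z' := by
  unfold negH
  refine Finset.sum_congr rfl fun ω _ => ?_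
  rw [prOf_congr P (fun ω' => h ω' ω)]

lemma negH_mono {γ γ' : Type*} [Fintype γ] [Fintype γ'] (P : Ω → ℝ)
    (hP0 : ∀ ω, 0 ≤ P ω) (Z : Ω → γ) (Z' : Ω → γ')
    (h : ∀ ω' ω, Z ω' = Z ω → Z' ω' = Z' ω) : negH P Z ≤ negH P Z' := by
  refine Finset.sum_le_sum fun ω _ => ?_
  by_cases hω : P ω = 0
  · simp [hω]
  · have hPω : 0 < P ω := lt_of_le_of_ne (hP0 ω) (Ne.symm hω)
    have h1 : 0 < prOf P (fun ω' => Z ω' = Z ω) := lt_of_lt_of_le hPω (le_prOf P hP0 ω rfl)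
    have h2 : prOf P (fun ω' => Z ω' = Z ω) ≤ prOf P (fun ω' => Z' ω' = Z' ω) :=
      prOf_mono P hP0 fun ω' => h ω' ω
    exact mul_le_mul_of_nonneg_left (Real.logb_le_logb_of_le (by norm_num) h1 h2) (hP0 ω)

lemma negH_value {γ : Type*} [Fintype γ] (P : Ω → ℝ) (Z : Ω → γ) :
    negH P Z = ∑ v, prOf P (fun ω => Z ω = v) * Real.logb 2 (prOf P (fun ω => Z ω = v)) :=
  (sum_prOf_mul P Z (fun v => Real.logb 2 (prOf P (fun ω => Z ω = v)))).symm

lemma negH_ge_neg_logb_card {γ : Type*} [Fintype γ] (P : Ω → ℝ)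
    (hP0 : ∀ ω, 0 ≤ P ω) (hP1 : ∑ ω, P ω = 1) (Z : Ω → γ) (hγ : 0 < Fintype.card γ) :
    -(Real.logb 2 (Fintype.card γ)) ≤ negH P Z := by
  set N : ℝ := (Fintype.card γ : ℝ) with hN
  have hNpos : (0:ℝ) < N := by rw [hN]; exact_mod_cast hγ
  set q : γ → ℝ := fun v => prOf P (fun ω => Z ω = v) with hq
  have hq0 : ∀ v, 0 ≤ q v := fun v => prOf_nonneg P hP0 _
  have hqsum : ∑ v, q v = 1 := sum_prOf_eq_one P hP1 Z
  have hg := gibbs q (fun _ => N⁻¹) hq0 (fun _ => by positivity)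
    (by rw [Finset.sum_const, hqsum]; simp [hN, nsmul_eq_mul]; rw [mul_inv_cancel₀ (ne_of_gt hNpos)]) (fun x h => absurd h (by positivity))
  have hsplit : ∀ v, q v * Real.logb 2 (N⁻¹ / q v)
      = q v * Real.logb 2 N⁻¹ - q v * Real.logb 2 (q v) := by
    intro v
    by_cases hv : q v = 0
    · simp [hv]
    · rw [Real.logb_div (by positivity) hv, mul_sub]
  rw [Finset.sum_congr rfl fun v _ => hsplit v, Finset.sum_sub_distrib,
    ← Finset.sum_mul, hqsum, one_mul, Real.logb_inv] at hg
  have : negH P Z = ∑ v, q v * Real.logb 2 (q v) := negH_value P Z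
  linarith

end NegH

section DP
variable {Ω : Type*} [Fintype Ω] {r b : ℕ} {𝒳 : Fin r → Type*} [∀ i, Fintype (𝒳 i)]

/-- The conditioning variable `W_i = (X_{<i}, B)`. -/
def Wv (X : ∀ i, Ω → 𝒳 i) (B : Ω → Fin (2 ^ b)) (i : Fin r) (ω : Ω) :
    ((j : {j : Fin r // j < i}) → 𝒳 j.1) × Fin (2 ^ b) :=
  (fun j => X j.1 ω, B ω)

/-- Prefix variable indexed by a natural number cutoff. -/
def Vv (X : ∀ i, Ω → 𝒳 i) (B : Ω → Fin (2 ^ b)) (k : ℕ) (ω : Ω) :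
    ((j : {j : Fin r // (j : ℕ) < k}) → 𝒳 j.1) × Fin (2 ^ b) :=
  (fun j => X j.1 ω, B ω)

variable (X : ∀ i, Ω → 𝒳 i) (B : Ω → Fin (2 ^ b))

lemma Wv_iff_Vv (i : Fin r) (ω' ω : Ω) :
    Wv X B i ω' = Wv X B i ω ↔ Vv X B (i : ℕ) ω' = Vv X B (i : ℕ) ω := by
  simp only [Wv, Vv, Prod.mk.injEq, funext_iff]
  constructor
  · rintro ⟨h1, h2⟩
    exact ⟨fun j => h1 ⟨j.1, j.2⟩, h2⟩
  · rintro ⟨h1, h2⟩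
    exact ⟨fun j => h1 ⟨j.1, j.2⟩, h2⟩

lemma Jv_iff_Vv (i : Fin r) (ω' ω : Ω) :
    (X i ω', Wv X B i ω') = (X i ω, Wv X B i ω)
      ↔ Vv X B ((i : ℕ) + 1) ω' = Vv X B ((i : ℕ) + 1) ω := by
  simp only [Wv, Vv, Prod.mk.injEq, funext_iff]
  constructor
  · rintro ⟨hx, h1, h2⟩
    refine ⟨fun j => ?_, h2⟩
    rcases Nat.lt_succ_iff_lt_or_eq.mp j.2 with h | h
    · exact h1 ⟨j.1, h⟩
    · obtain ⟨j', hj⟩ := j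
      have : j' = i := Fin.ext h
      subst this
      exact hx
  · rintro ⟨h1, h2⟩
    refine ⟨h1 ⟨i, Nat.lt_succ_self _⟩, fun j => h1 ⟨j.1, Nat.lt_succ_of_lt j.2⟩, h2⟩

lemma Vv_zero_iff (ω' ω : Ω) :
    Vv X B 0 ω' = Vv X B 0 ω ↔ B ω' = B ω := by
  simp only [Vv, Prod.mk.injEq, funext_iff]
  constructor
  · rintro ⟨_, h2⟩; exact h2
  · intro h; exact ⟨fun j => absurd j.2 (Nat.not_lt_zero _), h⟩

lemma Vv_top_imp (ω' ω : Ω) (h : Vv X B r ω' = Vv X B r ω) :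
    (fun j : Fin r => X j ω') = fun j => X j ω := by
  simp only [Vv, Prod.mk.injEq, funext_iff] at h ⊢
  exact fun j => h.1 ⟨j, j.isLt⟩

end DP

section DP2
set_option linter.unusedSectionVars false
variable {Ω : Type*} [Fintype Ω] {r b : ℕ} {𝒳 : Fin r → Type*} [∀ i, Fintype (𝒳 i)]
variable (P : Ω → ℝ) (X : ∀ i, Ω → 𝒳 i) (B : Ω → Fin (2 ^ b))

noncomputable def Dkl (i : Fin r) (w : ((j : {j : Fin r // j < i}) → 𝒳 j.1) × Fin (2 ^ b)) : ℝ :=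
  klBits
    (fun x : 𝒳 i => prOf P (fun ω => X i ω = x ∧ Wv X B i ω = w) /
        prOf P (fun ω => Wv X B i ω = w))
    (fun x : 𝒳 i => prOf P (fun ω => X i ω = x))

noncomputable def Ii (i : Fin r) : ℝ :=
  ∑ w, prOf P (fun ω => Wv X B i ω = w) * Dkl P X B i w

lemma Dkl_nonneg (hP0 : ∀ ω, 0 ≤ P ω) (hP1 : ∑ ω, P ω = 1) (i : Fin r)
    (w : ((j : {j : Fin r // j < i}) → 𝒳 j.1) × Fin (2 ^ b)) :
    0 ≤ Dkl P X B i w := by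
  set pw := prOf P (fun ω => Wv X B i ω = w) with hpwdef
  by_cases hpw : pw = 0
  · simp only [Dkl, klBits, ← hpwdef, hpw, div_zero, zero_mul, Finset.sum_const_zero, le_refl]
  · have hpwpos : 0 < pw := lt_of_le_of_ne (prOf_nonneg P hP0 _) (Ne.symm hpw)
    set μ : 𝒳 i → ℝ := fun x => prOf P (fun ω => X i ω = x ∧ Wv X B i ω = w) / pw with hμdef
    set ν : 𝒳 i → ℝ := fun x => prOf P (fun ω => X i ω = x) with hνdef
    have habs : ∀ x, ν x = 0 → μ x = 0 := by
      intro x hx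
      have h1 : prOf P (fun ω => X i ω = x ∧ Wv X B i ω = w) ≤ ν x :=
        prOf_mono P hP0 fun ω h => h.1
      have h2 : (0:ℝ) ≤ prOf P (fun ω => X i ω = x ∧ Wv X B i ω = w) := prOf_nonneg P hP0 _
      have : prOf P (fun ω => X i ω = x ∧ Wv X B i ω = w) = 0 := le_antisymm (hx ▸ h1) h2
      simp [hμdef, this]
    have hμsum : ∑ x, μ x = 1 := by
      rw [hμdef, ← Finset.sum_div, sum_prOf_and, ← hpwdef, div_self hpw]
    have hνsum : ∑ x, ν x = 1 := sum_prOf_eq_one P hP1 (X i)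
    have hg := gibbs μ ν (fun x => div_nonneg (prOf_nonneg P hP0 _) hpwpos.le)
      (fun x => prOf_nonneg P hP0 _) (by rw [hμsum, hνsum]) habs
    have hflip : ∀ x, μ x * Real.logb 2 (μ x / ν x) = -(μ x * Real.logb 2 (ν x / μ x)) := by
      intro x
      rw [show μ x / ν x = (ν x / μ x)⁻¹ by rw [inv_div], Real.logb_inv]
      ring
    have : Dkl P X B i w = -∑ x, μ x * Real.logb 2 (ν x / μ x) := by
      rw [Dkl, klBits, Finset.sum_congr rfl fun x _ => hflip x, Finset.sum_neg_distrib]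
    rw [this]
    linarith

lemma pw_mul_Dkl (hP0 : ∀ ω, 0 ≤ P ω) (i : Fin r)
    (w : ((j : {j : Fin r // j < i}) → 𝒳 j.1) × Fin (2 ^ b)) :
    prOf P (fun ω => Wv X B i ω = w) * Dkl P X B i w
      = ∑ x, prOf P (fun ω => X i ω = x ∧ Wv X B i ω = w) *
          Real.logb 2 (prOf P (fun ω => X i ω = x ∧ Wv X B i ω = w) /
            (prOf P (fun ω => Wv X B i ω = w) * prOf P (fun ω => X i ω = x))) := by
  set pw := prOf P (fun ω => Wv X B i ω = w) with hpwdef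
  rw [Dkl, klBits, Finset.mul_sum]
  refine Finset.sum_congr rfl fun x _ => ?_
  set pj := prOf P (fun ω => X i ω = x ∧ Wv X B i ω = w) with hpjdef
  set px := prOf P (fun ω => X i ω = x) with hpxdef
  by_cases hpw : pw = 0
  · have hpj : pj = 0 := by
      have h1 : pj ≤ pw := prOf_mono P hP0 fun ω h => h.2
      exact le_antisymm (hpw ▸ h1) (prOf_nonneg P hP0 _)
    simp [hpw, hpj]
  · rw [div_div, ← hpwdef]
    field_simp

lemma Ii_eq (hP0 : ∀ ω, 0 ≤ P ω) (i : Fin r) :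
    Ii P X B i
      = negH P (fun ω => (X i ω, Wv X B i ω)) - negH P (Wv X B i) - negH P (X i) := by
  classical
  have h1 : Ii P X B i
      = ∑ v : 𝒳 i × (((j : {j : Fin r // j < i}) → 𝒳 j.1) × Fin (2 ^ b)),
          prOf P (fun ω => (X i ω, Wv X B i ω) = v) *
            Real.logb 2 (prOf P (fun ω => (X i ω, Wv X B i ω) = v) /
              (prOf P (fun ω => Wv X B i ω = v.2) * prOf P (fun ω => X i ω = v.1))) := by
    rw [Ii, Finset.sum_congr rfl fun w _ => pw_mul_Dkl P X B hP0 i w]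
    have hswap : ∀ (F : 𝒳 i × (((j : {j : Fin r // j < i}) → 𝒳 j.1) × Fin (2 ^ b)) → ℝ),
        ∑ v, F v = ∑ w, ∑ x, F (x, w) := by
      intro F
      rw [Fintype.sum_prod_type, Finset.sum_comm]
    rw [hswap]
    refine Finset.sum_congr rfl fun w _ => Finset.sum_congr rfl fun x _ => ?_
    have e : prOf P (fun ω => (X i ω, Wv X B i ω) = (x, w))
        = prOf P (fun ω => X i ω = x ∧ Wv X B i ω = w) :=
      prOf_congr P (fun ω => by simp [Prod.ext_iff])
    dsimp only
    rw [e]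
  have h2 := sum_prOf_mul P (fun ω => (X i ω, Wv X B i ω))
    (fun v => Real.logb 2 (prOf P (fun ω => (X i ω, Wv X B i ω) = v) /
      (prOf P (fun ω => Wv X B i ω = v.2) * prOf P (fun ω => X i ω = v.1))))
  have h3 : ∀ ω, P ω *
      Real.logb 2 (prOf P (fun ω' => (X i ω', Wv X B i ω') = (X i ω, Wv X B i ω)) /
        (prOf P (fun ω' => Wv X B i ω' = Wv X B i ω) * prOf P (fun ω' => X i ω' = X i ω)))
      = P ω * Real.logb 2 (prOf P (fun ω' => (X i ω', Wv X B i ω') = (X i ω, Wv X B i ω)))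
        - P ω * Real.logb 2 (prOf P (fun ω' => Wv X B i ω' = Wv X B i ω))
        - P ω * Real.logb 2 (prOf P (fun ω' => X i ω' = X i ω)) := by
    intro ω
    by_cases hω : P ω = 0
    · simp [hω]
    · have hPω : 0 < P ω := lt_of_le_of_ne (hP0 ω) (Ne.symm hω)
      have ha : 0 < prOf P (fun ω' => (X i ω', Wv X B i ω') = (X i ω, Wv X B i ω)) :=
        lt_of_lt_of_le hPω (le_prOf P hP0 ω rfl)
      have hc : 0 < prOf P (fun ω' => Wv X B i ω' = Wv X B i ω) :=
        lt_of_lt_of_le hPω (le_prOf P hP0 ω rfl)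
      have hd : 0 < prOf P (fun ω' => X i ω' = X i ω) :=
        lt_of_lt_of_le hPω (le_prOf P hP0 ω rfl)
      rw [Real.logb_div ha.ne' (mul_ne_zero hc.ne' hd.ne'), Real.logb_mul hc.ne' hd.ne']
      ring
  calc Ii P X B i
      = ∑ v : 𝒳 i × (((j : {j : Fin r // j < i}) → 𝒳 j.1) × Fin (2 ^ b)),
          prOf P (fun ω => (X i ω, Wv X B i ω) = v) *
            Real.logb 2 (prOf P (fun ω => (X i ω, Wv X B i ω) = v) /
              (prOf P (fun ω => Wv X B i ω = v.2) * prOf P (fun ω => X i ω = v.1))) := h1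
    _ = ∑ ω, P ω *
          Real.logb 2 (prOf P (fun ω' => (X i ω', Wv X B i ω') = (X i ω, Wv X B i ω)) /
            (prOf P (fun ω' => Wv X B i ω' = Wv X B i ω) * prOf P (fun ω' => X i ω' = X i ω))) := h2
    _ = ∑ ω, (P ω * Real.logb 2 (prOf P (fun ω' => (X i ω', Wv X B i ω') = (X i ω, Wv X B i ω)))
        - P ω * Real.logb 2 (prOf P (fun ω' => Wv X B i ω' = Wv X B i ω))
        - P ω * Real.logb 2 (prOf P (fun ω' => X i ω' = X i ω))) :=
        Finset.sum_congr rfl fun ω _ => h3 ω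
    _ = negH P (fun ω => (X i ω, Wv X B i ω)) - negH P (Wv X B i) - negH P (X i) := by
        rw [Finset.sum_sub_distrib, Finset.sum_sub_distrib]
        rfl

lemma negH_indep (hP0 : ∀ ω, 0 ≤ P ω)
    (hindep : ∀ x : ∀ i, 𝒳 i,
      prOf P (fun ω => ∀ i, X i ω = x i) = ∏ i, prOf P (fun ω => X i ω = x i)) :
    negH P (fun ω => (fun j : Fin r => X j ω)) = ∑ j, negH P (X j) := by
  classical
  have key : ∀ ω, P ω * Real.logb 2 (prOf P (fun ω' => (fun j : Fin r => X j ω') = fun j => X j ω))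
      = ∑ j, P ω * Real.logb 2 (prOf P (fun ω' => X j ω' = X j ω)) := by
    intro ω
    have e1a : prOf P (fun ω' => (fun j : Fin r => X j ω') = fun j => X j ω)
        = prOf P (fun ω' => ∀ j, X j ω' = X j ω) := prOf_congr P (fun ω' => funext_iff)
    have e1b : prOf P (fun ω' => ∀ j, X j ω' = X j ω)
        = ∏ j, prOf P (fun ω' => X j ω' = X j ω) := hindep (fun j => X j ω)
    by_cases hω : P ω = 0
    · simp [hω]
    · have hPω : 0 < P ω := lt_of_le_of_ne (hP0 ω) (Ne.symm hω)
      have hj : ∀ j ∈ Finset.univ, prOf P (fun ω' => X j ω' = X j ω) ≠ 0 := by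
        intro j _
        have : 0 < prOf P (fun ω' => X j ω' = X j ω) :=
          lt_of_lt_of_le hPω (le_prOf P hP0 ω rfl)
        exact this.ne'
      rw [e1a, e1b, Real.logb, Real.log_prod hj, Finset.sum_div, Finset.mul_sum]
      rfl
  have e0 : negH P (fun ω => (fun j : Fin r => X j ω))
      = ∑ ω, P ω * Real.logb 2 (prOf P (fun ω' => (fun j : Fin r => X j ω') = fun j => X j ω)) := rfl
  rw [e0, Finset.sum_congr rfl fun ω _ => key ω, Finset.sum_comm]
  rfl

end DP2


/-- Information-theoretic direct product theorem (Theorem 6, abstract form). -/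
theorem direct_product_min
    {Ω : Type*} [Fintype Ω] (P : Ω → ℝ)
    (hP0 : ∀ ω, 0 ≤ P ω) (hP1 : ∑ ω, P ω = 1)
    {r b : ℕ} (hr : 1 ≤ r)
    {𝒳 : Fin r → Type*} [∀ i, Fintype (𝒳 i)]
    (X : ∀ i, Ω → 𝒳 i)
    (hindep : ∀ x : ∀ i, 𝒳 i,
      prOf P (fun ω => ∀ i, X i ω = x i) = ∏ i, prOf P (fun ω => X i ω = x i))
    (B : Ω → Fin (2 ^ b))
    (cost : Fin r → Ω → ℝ) (hcost : ∀ i ω, 0 ≤ cost i ω)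
    (f : ℝ → ℝ) (hconv : ConvexOn ℝ (Set.Ici 0) f) (hanti : AntitoneOn f (Set.Ici 0))
    (hlb : ∀ (i : Fin r) (w : ((j : {j : Fin r // j < i}) → 𝒳 j.1) × Fin (2 ^ b)),
      0 < prOf P (fun ω => ((fun j : {j : Fin r // j < i} => X j.1 ω), B ω) = w) →
      (∑ ω, (if ((fun j : {j : Fin r // j < i} => X j.1 ω), B ω) = w then P ω else 0) * cost i ω) /
          prOf P (fun ω => ((fun j : {j : Fin r // j < i} => X j.1 ω), B ω) = w)
        ≥ f (klBits
            (fun x : 𝒳 i =>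
              prOf P (fun ω => X i ω = x ∧ ((fun j : {j : Fin r // j < i} => X j.1 ω), B ω) = w) /
                prOf P (fun ω => ((fun j : {j : Fin r // j < i} => X j.1 ω), B ω) = w))
            (fun x : 𝒳 i => prOf P (fun ω => X i ω = x)))) :
    ∑ ω, P ω * ∑ i, cost i ω ≥ (r : ℝ) * f ((b : ℝ) / (r : ℝ)) := by
  classical
  have hlb' : ∀ (i : Fin r) (w : ((j : {j : Fin r // j < i}) → 𝒳 j.1) × Fin (2 ^ b)),
      0 < prOf P (fun ω => Wv X B i ω = w) →
      (∑ ω, (if Wv X B i ω = w then P ω else 0) * cost i ω) /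
          prOf P (fun ω => Wv X B i ω = w) ≥ f (Dkl P X B i w) := hlb
  -- Step A: conditional lower bounds average to expectations
  have stepA : ∀ i : Fin r,
      ∑ w, prOf P (fun ω => Wv X B i ω = w) * f (Dkl P X B i w) ≤ ∑ ω, P ω * cost i ω := by
    intro i
    have expand : ∑ w, ∑ ω, (if Wv X B i ω = w then P ω else 0) * cost i ω
        = ∑ ω, P ω * cost i ω := by
      rw [Finset.sum_comm]
      refine Finset.sum_congr rfl fun ω _ => ?_
      have h : ∀ w, (if Wv X B i ω = w then P ω else 0) * cost i ω
          = if Wv X B i ω = w then P ω * cost i ω else 0 := fun w => by split <;> simp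
      rw [Finset.sum_congr rfl fun w _ => h w, Finset.sum_ite_eq]
      simp
    rw [← expand]
    refine Finset.sum_le_sum fun w _ => ?_
    by_cases hpw : prOf P (fun ω => Wv X B i ω = w) = 0
    · rw [hpw, zero_mul]
      refine Finset.sum_nonneg fun ω _ => ?_
      have h0 : (0:ℝ) ≤ if Wv X B i ω = w then P ω else 0 := by split <;> simp [hP0 ω]
      exact mul_nonneg h0 (hcost i ω)
    · have hpwpos : 0 < prOf P (fun ω => Wv X B i ω = w) :=
        lt_of_le_of_ne (prOf_nonneg P hP0 _) (Ne.symm hpw)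
      have h := hlb' i w hpwpos
      rw [ge_iff_le, le_div_iff₀ hpwpos] at h
      linarith [h]
  -- Step B: Jensen inside each i
  have stepB : ∀ i : Fin r,
      f (Ii P X B i) ≤ ∑ w, prOf P (fun ω => Wv X B i ω = w) * f (Dkl P X B i w) := by
    intro i
    have h := hconv.map_sum_le (t := Finset.univ)
      (w := fun w => prOf P (fun ω => Wv X B i ω = w)) (p := fun w => Dkl P X B i w)
      (fun w _ => prOf_nonneg P hP0 _) (sum_prOf_eq_one P hP1 (Wv X B i))
      (fun w _ => Set.mem_Ici.mpr (Dkl_nonneg P X B hP0 hP1 i w))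
    simpa [Ii, smul_eq_mul] using h
  -- Step C: total mutual information bounded by b
  have hsumI : ∑ i, Ii P X B i ≤ (b : ℝ) := by
    have telescope : ∑ i : Fin r, (negH P (Vv X B ((i:ℕ)+1)) - negH P (Vv X B (i:ℕ)))
        = negH P (Vv X B r) - negH P (Vv X B 0) := by
      rw [Fin.sum_univ_eq_sum_range (fun k => negH P (Vv X B (k+1)) - negH P (Vv X B k)) r]
      exact Finset.sum_range_sub (fun k => negH P (Vv X B k)) r
    have hXall : negH P (fun ω => (fun j : Fin r => X j ω)) = ∑ j, negH P (X j) :=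
      negH_indep P X hP0 hindep
    have hVr : negH P (Vv X B r) ≤ ∑ j, negH P (X j) := by
      rw [← hXall]
      exact negH_mono P hP0 _ _ (Vv_top_imp X B)
    have hV0 : -(b : ℝ) ≤ negH P (Vv X B 0) := by
      have h1 : negH P (Vv X B 0) = negH P B := negH_congr P _ _ (Vv_zero_iff X B)
      have h2 := negH_ge_neg_logb_card P hP0 hP1 B (by simp)
      have h3 : Real.logb 2 ((Fintype.card (Fin (2 ^ b)) : ℝ)) = (b : ℝ) := by
        rw [Fintype.card_fin]
        push_cast
        rw [Real.logb_pow, Real.logb_self_eq_one (by norm_num)]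
        ring
      rw [h1]
      rw [h3] at h2
      exact h2
    calc ∑ i, Ii P X B i
        = ∑ i : Fin r, (negH P (Vv X B ((i:ℕ)+1)) - negH P (Vv X B (i:ℕ)))
            - ∑ i, negH P (X i) := by
          rw [← Finset.sum_sub_distrib]
          refine Finset.sum_congr rfl fun i _ => ?_
          rw [Ii_eq P X B hP0 i,
            negH_congr P _ _ (Jv_iff_Vv X B i), negH_congr P _ _ (Wv_iff_Vv X B i)]
      _ = negH P (Vv X B r) - negH P (Vv X B 0) - ∑ i, negH P (X i) := by rw [telescope]
      _ ≤ (b : ℝ) := by linarith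
  -- assemble
  have hE : ∑ ω, P ω * ∑ i, cost i ω = ∑ i, ∑ ω, P ω * cost i ω := by
    simp_rw [Finset.mul_sum]
    rw [Finset.sum_comm]
  have chain1 : ∑ i, f (Ii P X B i) ≤ ∑ ω, P ω * ∑ i, cost i ω := by
    rw [hE]
    exact Finset.sum_le_sum fun i _ => le_trans (stepB i) (stepA i)
  have hrpos : (0:ℝ) < (r : ℝ) := by exact_mod_cast hr
  have hInonneg : ∀ i, 0 ≤ Ii P X B i := fun i =>
    Finset.sum_nonneg fun w _ =>
      mul_nonneg (prOf_nonneg P hP0 _) (Dkl_nonneg P X B hP0 hP1 i w)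
  have j2 : f ((∑ i, Ii P X B i) / (r : ℝ)) ≤ (∑ i, f (Ii P X B i)) / (r : ℝ) := by
    have h := hconv.map_sum_le (t := Finset.univ) (w := fun _ : Fin r => (r : ℝ)⁻¹)
      (p := fun i => Ii P X B i) (fun _ _ => by positivity)
      (by
        rw [Finset.sum_const, Finset.card_univ, Fintype.card_fin, nsmul_eq_mul]
        field_simp)
      (fun i _ => Set.mem_Ici.mpr (hInonneg i))
    simp only [smul_eq_mul, ← Finset.mul_sum] at h
    rw [div_eq_inv_mul, div_eq_inv_mul]
    exact h
  have j3 : f ((b : ℝ) / (r : ℝ)) ≤ f ((∑ i, Ii P X B i) / (r : ℝ)) := by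
    refine hanti (Set.mem_Ici.mpr ?_) (Set.mem_Ici.mpr ?_) ?_
    · exact div_nonneg (Finset.sum_nonneg fun i _ => hInonneg i) hrpos.le
    · positivity
    · gcongr
  rw [ge_iff_le]
  calc (r : ℝ) * f ((b : ℝ) / (r : ℝ))
      ≤ (r : ℝ) * f ((∑ i, Ii P X B i) / (r : ℝ)) := by
        exact mul_le_mul_of_nonneg_left j3 hrpos.le
    _ ≤ (r : ℝ) * ((∑ i, f (Ii P X B i)) / (r : ℝ)) := mul_le_mul_of_nonneg_left j2 hrpos.le
    _ = ∑ i, f (Ii P X B i) := by field_simp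
    _ ≤ ∑ ω, P ω * ∑ i, cost i ω := chain1
end

section
/- Yao's principle for lower bounds (Theorem 5, abstract form). Let I and D be nonempty types (inputs and deterministic algorithms), cost : D → I → ℝ≥0 and opt : I → ℝ≥0 functions, and c > 1 a real constant. Assume that for every ε > 0 and every α ∈ ℝ there exists a finitely supported probability distribution p on I such that for every d ∈ D: Σ_σ p(σ)·cost(d,σ) ≥ (c − ε)·(Σ_σ p(σ)·opt(σ)) + α. Then for every probability mass function μ on D, every real c' < c, and every real α', there exists σ ∈ I such that E_{d∼μ}[cost(d,σ)] > c'·opt(σ) + α'. (Equivalently: no randomized algorithm, i.e. distribution over D, is c'-competitive for any c' < c.) -/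
open Classical
open scoped ENNReal NNReal

/-- Yao's principle for lower bounds (Theorem 5, abstract form). -/
theorem yao_principle
    {I D : Type*} [Nonempty I] [Nonempty D]
    (cost : D → I → ℝ≥0) (opt : I → ℝ≥0)
    (c : ℝ) (hc : 1 < c)
    (H : ∀ ε : ℝ, 0 < ε → ∀ α : ℝ, ∃ (S : Finset I) (p : I → ℝ),
      (∀ σ, 0 ≤ p σ) ∧ (∀ σ ∉ S, p σ = 0) ∧ (∑ σ ∈ S, p σ) = 1 ∧
      ∀ d : D, ∑ σ ∈ S, p σ * (cost d σ : ℝ)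
        ≥ (c - ε) * (∑ σ ∈ S, p σ * (opt σ : ℝ)) + α)
    (μ : PMF D) (c' α' : ℝ) (hc' : c' < c) :
    ∃ σ : I, ((c' * (opt σ : ℝ) + α' : ℝ) : EReal)
      < ((∑' d : D, μ d * (cost d σ : ℝ≥0∞)) : ℝ≥0∞).toEReal := by
  by_contra hcon
  push_neg at hcon
  set E : I → ℝ≥0∞ := fun σ => ∑' d : D, μ d * (cost d σ : ℝ≥0∞) with hE
  have hfin : ∀ σ, E σ ≠ ⊤ := by
    intro σ h
    have h1 := hcon σ
    rw [show (∑' d : D, μ d * (cost d σ : ℝ≥0∞)) = E σ from rfl, h,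
      EReal.coe_ennreal_top] at h1
    exact (not_le.2 (EReal.coe_lt_top _)) h1
  have hER : ∀ σ, (E σ).toReal ≤ c' * (opt σ : ℝ) + α' := by
    intro σ
    have h1 := hcon σ
    rw [show (∑' d : D, μ d * (cost d σ : ℝ≥0∞)) = E σ from rfl] at h1
    have h2 : ((E σ).toReal : EReal) = ((E σ : ℝ≥0∞) : EReal) := by
      rw [← EReal.toReal_coe_ennreal]
      exact EReal.coe_toReal (by simp [hfin σ]) (by simp)
    rw [← h2] at h1
    exact_mod_cast h1
  have hμfin : ∀ d, μ d ≠ ⊤ := fun d => μ.apply_ne_top d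
  have hcfin : ∀ σ (d : D), μ d * (cost d σ : ℝ≥0∞) ≠ ⊤ :=
    fun σ d => ENNReal.mul_ne_top (hμfin d) ENNReal.coe_ne_top
  set ν : D → ℝ := fun d => (μ d).toReal with hν
  have hν0 : ∀ d, 0 ≤ ν d := fun d => ENNReal.toReal_nonneg
  have hνsum : Summable ν :=
    ENNReal.summable_toReal (by rw [μ.tsum_coe]; exact ENNReal.one_ne_top)
  have hνtsum : ∑' d, ν d = 1 := by
    rw [hν, ← ENNReal.tsum_toReal_eq hμfin, μ.tsum_coe, ENNReal.toReal_one]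
  have hsumm : ∀ σ, Summable (fun d => ν d * (cost d σ : ℝ)) := by
    intro σ
    have := ENNReal.summable_toReal (hfin σ)
    simpa [ENNReal.toReal_mul] using this
  have hEtoReal : ∀ σ, (E σ).toReal = ∑' d, ν d * (cost d σ : ℝ) := by
    intro σ
    rw [hE, ENNReal.tsum_toReal_eq (hcfin σ)]
    simp [ENNReal.toReal_mul]
    rfl
  -- apply the hypothesis with ε = c - c'
  obtain ⟨S, p, hp0, hps, hp1, hge⟩ := H (c - c') (by linarith) (α' + 1)
  set T : ℝ := ∑ σ ∈ S, p σ * (opt σ : ℝ) with hT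
  -- the weighted expectation
  have hswap : ∑ σ ∈ S, p σ * (E σ).toReal
      = ∑' d, ∑ σ ∈ S, p σ * (ν d * (cost d σ : ℝ)) := by
    rw [Summable.tsum_finsetSum (fun σ _ => (hsumm σ).mul_left (p σ))]
    refine Finset.sum_congr rfl fun σ _ => ?_
    rw [hEtoReal σ, ← tsum_mul_left]
  -- lower bound
  have hlow : c' * T + (α' + 1) ≤ ∑ σ ∈ S, p σ * (E σ).toReal := by
    rw [hswap]
    have hpt : ∀ d : D, ν d * (c' * T + (α' + 1))
        ≤ ∑ σ ∈ S, p σ * (ν d * (cost d σ : ℝ)) := by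
      intro d
      have h1 : ∑ σ ∈ S, p σ * (ν d * (cost d σ : ℝ))
          = ν d * ∑ σ ∈ S, p σ * (cost d σ : ℝ) := by
        rw [Finset.mul_sum]; exact Finset.sum_congr rfl fun σ _ => by ring
      rw [h1]
      have h2 := hge d
      have h3 : c' * T + (α' + 1) ≤ ∑ σ ∈ S, p σ * (cost d σ : ℝ) := by
        have : c - (c - c') = c' := by ring
        rw [this] at h2; linarith [h2]
      exact mul_le_mul_of_nonneg_left h3 (hν0 d)
    calc c' * T + (α' + 1) = ∑' d, ν d * (c' * T + (α' + 1)) := by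
          rw [tsum_mul_right, hνtsum, one_mul]
      _ ≤ ∑' d, ∑ σ ∈ S, p σ * (ν d * (cost d σ : ℝ)) := by
          refine Summable.tsum_le_tsum hpt (hνsum.mul_right _) ?_
          exact summable_sum fun σ _ => ((hsumm σ).mul_left (p σ))
  -- upper bound
  have hup : ∑ σ ∈ S, p σ * (E σ).toReal ≤ c' * T + α' := by
    have h1 : ∑ σ ∈ S, p σ * (E σ).toReal
        ≤ ∑ σ ∈ S, p σ * (c' * (opt σ : ℝ) + α') :=
      Finset.sum_le_sum fun σ _ => mul_le_mul_of_nonneg_left (hER σ) (hp0 σ)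
    have h2 : ∑ σ ∈ S, p σ * (c' * (opt σ : ℝ) + α') = c' * T + α' := by
      simp only [mul_add]
      rw [Finset.sum_add_distrib, ← Finset.sum_mul, hp1, one_mul, hT,
        Finset.mul_sum]
      congr 1
      exact Finset.sum_congr rfl fun σ _ => by ring
    linarith
  linarith
end

section
/- Information-theoretic direct product theorem for maximization (appendix Theorem, abstract form). Let Ω be a finite probability space, r ≥ 1 and b natural numbers, 𝒳₁,…,𝒳ᵣ finite types, and X_i : Ω → 𝒳_i random variables that are mutually independent. Let B : Ω → Fin (2^b) be any random variable, and for 1 ≤ i ≤ r set W_i = (X₁,…,X_{i−1}, B). Let score_i : Ω → ℝ be nonnegative random variables. Suppose f : [0,∞) → ℝ is concave and nondecreasing and that for every i and every value w of W_i occurring with positive probability, E[score_i | W_i = w] ≤ f( D_KL( law of X_i conditioned on W_i = w ‖ law of X_i ) ). Then E[Σ_{i=1}^r score_i] ≤ r · f(b/r). -/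
open Classical

namespace DPaux

variable {Ω : Type*} [Fintype Ω] {P : Ω → ℝ}

noncomputable def pr (P : Ω → ℝ) {α : Type*} (Y : Ω → α) (y : α) : ℝ :=
  prOf P (fun ω => Y ω = y)

noncomputable def ent (P : Ω → ℝ) {α : Type*} [Fintype α] (Y : Ω → α) : ℝ :=
  -∑ y, pr P Y y * Real.logb 2 (pr P Y y)

lemma prOf_nonneg (hP0 : ∀ ω, 0 ≤ P ω) (s : Ω → Prop) : 0 ≤ prOf P s :=
  Finset.sum_nonneg fun ω _ => by by_cases h : s ω <;> simp [h, hP0 ω]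

lemma prOf_mono (hP0 : ∀ ω, 0 ≤ P ω) {s t : Ω → Prop} (h : ∀ ω, s ω → t ω) :
    prOf P s ≤ prOf P t := by
  refine Finset.sum_le_sum fun ω _ => ?_
  by_cases hs : s ω
  · simp [hs, h ω hs]
  · by_cases ht : t ω <;> simp [hs, ht, hP0 ω]

lemma prOf_congr {s t : Ω → Prop} (h : ∀ ω, s ω ↔ t ω) : prOf P s = prOf P t := by
  unfold prOf; exact Finset.sum_congr rfl fun ω _ => by rw [(h ω).eq]

lemma prOf_eq_zero_imp (hP0 : ∀ ω, 0 ≤ P ω) {s : Ω → Prop} (h : prOf P s = 0) :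
    ∀ ω, s ω → P ω = 0 := by
  intro ω hs
  have := (Finset.sum_eq_zero_iff_of_nonneg (fun ω _ => by
    by_cases h' : s ω <;> simp [h', hP0 ω])).mp h ω (Finset.mem_univ ω)
  simpa [hs] using this

lemma pr_nonneg (hP0 : ∀ ω, 0 ≤ P ω) {α : Type*} (Y : Ω → α) (y : α) : 0 ≤ pr P Y y :=
  prOf_nonneg hP0 _

lemma prOf_sum_fiber {α : Type*} [Fintype α] (Y : Ω → α) (s : Ω → Prop) :
    ∑ y, prOf P (fun ω => s ω ∧ Y ω = y) = prOf P s := by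
  unfold prOf
  rw [Finset.sum_comm]
  refine Finset.sum_congr rfl fun ω _ => ?_
  by_cases hs : s ω <;> simp [hs]

lemma prOf_sum_fiber' {α : Type*} [Fintype α] (Y : Ω → α) (s : Ω → Prop) :
    ∑ y, prOf P (fun ω => Y ω = y ∧ s ω) = prOf P s := by
  rw [← prOf_sum_fiber Y s]
  exact Finset.sum_congr rfl fun y _ => prOf_congr fun ω => and_comm

lemma sum_pr (hP1 : ∑ ω, P ω = 1) {α : Type*} [Fintype α] (Y : Ω → α) :
    ∑ y, pr P Y y = 1 := by
  unfold pr
  have := prOf_sum_fiber (P := P) Y (fun _ => True)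
  simp only [true_and] at this
  rw [this]
  simpa [prOf] using hP1

lemma pr_le_one (hP0 : ∀ ω, 0 ≤ P ω) (hP1 : ∑ ω, P ω = 1) {α : Type*} (Y : Ω → α) (y : α) :
    pr P Y y ≤ 1 := by
  have := prOf_mono (P := P) hP0 (s := fun ω => Y ω = y) (t := fun _ => True) (fun ω _ => trivial)
  simpa [pr, prOf, hP1] using this


/-- Gibbs' inequality. -/
lemma gibbs {α : Type*} [Fintype α] (μ ν : α → ℝ) (hμ0 : ∀ x, 0 ≤ μ x)
    (hμ1 : ∑ x, μ x = 1) (hν0 : ∀ x, 0 ≤ ν x) (hν1 : ∑ x, ν x ≤ 1)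
    (hsupp : ∀ x, ν x = 0 → μ x = 0) : 0 ≤ klBits μ ν := by
  have key : ∑ x, μ x * Real.log (ν x / μ x) ≤ 0 := by
    have hle : ∀ x, μ x * Real.log (ν x / μ x) ≤ (if 0 < μ x then ν x else 0) - μ x := by
      intro x
      rcases lt_or_eq_of_le (hμ0 x) with hpos | hzero
      · have hν : 0 < ν x := lt_of_le_of_ne (hν0 x) (fun h => by
          have := hsupp x h.symm; exact absurd this (ne_of_gt hpos))
        have hdiv : 0 < ν x / μ x := div_pos hν hpos
        have := Real.log_le_sub_one_of_pos hdiv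
        have h2 := mul_le_mul_of_nonneg_left this (le_of_lt hpos)
        simp only [hpos, if_pos]
        calc μ x * Real.log (ν x / μ x) ≤ μ x * (ν x / μ x - 1) := h2
          _ = ν x - μ x := by field_simp
      · simp [← hzero]
    calc ∑ x, μ x * Real.log (ν x / μ x) ≤ ∑ x, ((if 0 < μ x then ν x else 0) - μ x) :=
          Finset.sum_le_sum fun x _ => hle x
      _ = (∑ x, if 0 < μ x then ν x else 0) - 1 := by rw [Finset.sum_sub_distrib, hμ1]
      _ ≤ (∑ x, ν x) - 1 := by
          have : (∑ x, if 0 < μ x then ν x else 0) ≤ ∑ x, ν x :=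
            Finset.sum_le_sum fun x _ => by by_cases h : 0 < μ x <;> simp [h, hν0 x]
          linarith
      _ ≤ 0 := by linarith
  have hterm : ∀ x, μ x * Real.logb 2 (μ x / ν x) = -(μ x * Real.log (ν x / μ x)) / Real.log 2 := by
    intro x
    rcases lt_or_eq_of_le (hμ0 x) with hpos | hzero
    · have hν : 0 < ν x := lt_of_le_of_ne (hν0 x) (fun h => by
        have := hsupp x h.symm; exact absurd this (ne_of_gt hpos))
      rw [Real.logb, Real.log_div (ne_of_gt hpos) (ne_of_gt hν),
        Real.log_div (ne_of_gt hν) (ne_of_gt hpos)]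
      ring
    · simp [← hzero]
  rw [klBits]
  calc (0:ℝ) ≤ (-∑ x, μ x * Real.log (ν x / μ x)) / Real.log 2 := by
        apply div_nonneg (by linarith) (le_of_lt (Real.log_pos one_lt_two))
    _ = ∑ x, μ x * Real.logb 2 (μ x / ν x) := by
        rw [← Finset.sum_neg_distrib, Finset.sum_div]
        exact Finset.sum_congr rfl fun x _ => (hterm x).symm

/-- Entropy is at most log of cardinality. -/
lemma ent_le_logb_card (hP0 : ∀ ω, 0 ≤ P ω) (hP1 : ∑ ω, P ω = 1)
    {α : Type*} [Fintype α] (hα : 0 < (Fintype.card α : ℝ)) (Y : Ω → α) :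
    ent P Y ≤ Real.logb 2 (Fintype.card α) := by
  set n : ℝ := (Fintype.card α : ℝ)
  have hkl := gibbs (fun y => pr P Y y) (fun _ => n⁻¹) (fun y => pr_nonneg hP0 Y y)
    (sum_pr hP1 Y) (fun _ => by positivity)
    (by simp [Finset.sum_const]; rw [mul_inv_cancel₀ (ne_of_gt hα)])
    (fun y h => absurd h (by positivity))
  rw [klBits] at hkl
  have hterm : ∀ y, pr P Y y * Real.logb 2 (pr P Y y / n⁻¹)
      = pr P Y y * Real.logb 2 (pr P Y y) + pr P Y y * Real.logb 2 n := by
    intro y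
    rcases lt_or_eq_of_le (pr_nonneg hP0 Y y) with hpos | hzero
    · rw [show pr P Y y / n⁻¹ = pr P Y y * n by field_simp, Real.logb_mul (ne_of_gt hpos) (ne_of_gt hα), mul_add]
    · simp [← hzero]
  rw [Finset.sum_congr rfl fun y _ => hterm y, Finset.sum_add_distrib,
    ← Finset.sum_mul, sum_pr hP1 Y, one_mul] at hkl
  rw [ent]
  linarith


/-- Entropy is invariant under injective post-composition. -/
lemma ent_comp_inj {α β : Type*} [Fintype α] [Fintype β] (Y : Ω → α) (Z : Ω → β)
    (g : α → β) (hg : Function.Injective g) (h : ∀ ω, g (Y ω) = Z ω) :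
    ent P Z = ent P Y := by
  unfold ent
  congr 1
  have himg : ∀ z : β, z ∉ Finset.image g Finset.univ →
      pr P Z z * Real.logb 2 (pr P Z z) = 0 := by
    intro z hz
    have : pr P Z z = 0 := by
      unfold pr prOf
      refine Finset.sum_eq_zero fun ω _ => ?_
      have : Z ω ≠ z := fun hc => hz (Finset.mem_image.mpr ⟨Y ω, Finset.mem_univ _, by rw [h ω, hc]⟩)
      simp [this]
    simp [this]
  rw [← Finset.sum_subset (Finset.subset_univ (Finset.image g Finset.univ))
    (fun z _ hz => himg z hz)]
  rw [Finset.sum_image (fun a _ a' _ hh => hg hh)]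
  refine Finset.sum_congr rfl fun y _ => ?_
  have : pr P Z (g y) = pr P Y y := prOf_congr fun ω => by
    constructor
    · intro hz; exact hg (by rw [h ω, hz])
    · intro hy; rw [← h ω, hy]
  rw [this]

section pairs

variable {α β : Type*} [Fintype α] [Fintype β] (Y : Ω → α) (Z : Ω → β)

lemma pr_pair (y : α) (z : β) :
    pr P (fun ω => (Y ω, Z ω)) (y, z) = prOf P (fun ω => Y ω = y ∧ Z ω = z) :=
  prOf_congr fun ω => by simp [Prod.ext_iff]

lemma marginal_fst (y : α) :
    ∑ z, prOf P (fun ω => Y ω = y ∧ Z ω = z) = pr P Y y :=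
  prOf_sum_fiber Z _

lemma marginal_snd (z : β) :
    ∑ y, prOf P (fun ω => Y ω = y ∧ Z ω = z) = pr P Z z :=
  prOf_sum_fiber' Y _

lemma joint_le_fst (hP0 : ∀ ω, 0 ≤ P ω) (y : α) (z : β) :
    prOf P (fun ω => Y ω = y ∧ Z ω = z) ≤ pr P Y y :=
  prOf_mono hP0 fun ω hw => hw.1

lemma joint_le_snd (hP0 : ∀ ω, 0 ≤ P ω) (y : α) (z : β) :
    prOf P (fun ω => Y ω = y ∧ Z ω = z) ≤ pr P Z z :=
  prOf_mono hP0 fun ω hw => hw.2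

lemma ent_pair_expand :
    ent P (fun ω => (Y ω, Z ω)) = -∑ y, ∑ z,
      prOf P (fun ω => Y ω = y ∧ Z ω = z) *
        Real.logb 2 (prOf P (fun ω => Y ω = y ∧ Z ω = z)) := by
  unfold ent
  rw [Fintype.sum_prod_type]
  congr 1
  exact Finset.sum_congr rfl fun y _ => Finset.sum_congr rfl fun z _ => by rw [pr_pair]

/-- Entropy of a pair is at least entropy of the first component. -/
lemma ent_le_ent_pair (hP0 : ∀ ω, 0 ≤ P ω) :
    ent P Y ≤ ent P (fun ω => (Y ω, Z ω)) := by
  rw [ent_pair_expand, ent]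
  rw [neg_le_neg_iff]
  calc ∑ y, ∑ z, prOf P (fun ω => Y ω = y ∧ Z ω = z) *
        Real.logb 2 (prOf P (fun ω => Y ω = y ∧ Z ω = z))
      ≤ ∑ y, ∑ z, prOf P (fun ω => Y ω = y ∧ Z ω = z) * Real.logb 2 (pr P Y y) := by
        refine Finset.sum_le_sum fun y _ => Finset.sum_le_sum fun z _ => ?_
        set j := prOf P (fun ω => Y ω = y ∧ Z ω = z) with hj
        rcases lt_or_eq_of_le (prOf_nonneg hP0 (fun ω => Y ω = y ∧ Z ω = z)) with hpos | hzero
        · refine mul_le_mul_of_nonneg_left ?_ (le_of_lt hpos)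
          exact Real.logb_le_logb_of_le one_lt_two hpos (joint_le_fst Y Z hP0 y z)
        · have : j = 0 := by rw [hj, ← hzero]
          simp [this]
    _ = ∑ y, pr P Y y * Real.logb 2 (pr P Y y) := by
        refine Finset.sum_congr rfl fun y _ => ?_
        rw [← Finset.sum_mul, marginal_fst]


/-- Mutual information identity. -/
lemma mi_eq (hP0 : ∀ ω, 0 ≤ P ω) :
    ∑ y, ∑ z, prOf P (fun ω => Y ω = y ∧ Z ω = z) *
        Real.logb 2 (prOf P (fun ω => Y ω = y ∧ Z ω = z) / (pr P Y y * pr P Z z))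
      = ent P Y + ent P Z - ent P (fun ω => (Y ω, Z ω)) := by
  have key : ∀ y z,
      prOf P (fun ω => Y ω = y ∧ Z ω = z) *
        Real.logb 2 (prOf P (fun ω => Y ω = y ∧ Z ω = z) / (pr P Y y * pr P Z z))
      = prOf P (fun ω => Y ω = y ∧ Z ω = z) *
          Real.logb 2 (prOf P (fun ω => Y ω = y ∧ Z ω = z))
        - prOf P (fun ω => Y ω = y ∧ Z ω = z) * Real.logb 2 (pr P Y y)
        - prOf P (fun ω => Y ω = y ∧ Z ω = z) * Real.logb 2 (pr P Z z) := by
    intro y z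
    set j := prOf P (fun ω => Y ω = y ∧ Z ω = z) with hj
    rcases lt_or_eq_of_le (prOf_nonneg hP0 (fun ω => Y ω = y ∧ Z ω = z)) with hpos | hzero
    · have ha : 0 < pr P Y y := lt_of_lt_of_le hpos (joint_le_fst Y Z hP0 y z)
      have hc : 0 < pr P Z z := lt_of_lt_of_le hpos (joint_le_snd Y Z hP0 y z)
      rw [Real.logb_div (ne_of_gt hpos) (by positivity),
        Real.logb_mul (ne_of_gt ha) (ne_of_gt hc)]
      ring
    · have : j = 0 := by rw [hj, ← hzero]
      simp [this]
  rw [Finset.sum_congr rfl fun y _ => Finset.sum_congr rfl fun z _ => key y z]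
  have e1 : ∑ y, ∑ z, (prOf P (fun ω => Y ω = y ∧ Z ω = z) * Real.logb 2 (pr P Y y))
      = ∑ y, pr P Y y * Real.logb 2 (pr P Y y) := by
    refine Finset.sum_congr rfl fun y _ => ?_
    rw [← Finset.sum_mul, marginal_fst]
  have e2 : ∑ y, ∑ z, (prOf P (fun ω => Y ω = y ∧ Z ω = z) * Real.logb 2 (pr P Z z))
      = ∑ z, pr P Z z * Real.logb 2 (pr P Z z) := by
    rw [Finset.sum_comm]
    refine Finset.sum_congr rfl fun z _ => ?_
    rw [← Finset.sum_mul, marginal_snd]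
  simp only [Finset.sum_sub_distrib]
  rw [e1, e2, ent_pair_expand, ent, ent]
  ring

end pairs

/-- Entropy of an independent tuple is the sum of entropies. -/
lemma ent_indep (hP1 : ∑ ω, P ω = 1) {ι : Type*} [Fintype ι] [DecidableEq ι] {κ : ι → Type*}
    [∀ i, Fintype (κ i)] (Y : ∀ i, Ω → κ i)
    (h : ∀ x : ∀ i, κ i, pr P (fun ω i => Y i ω) x = ∏ i, pr P (Y i) (x i)) :
    ent P (fun ω i => Y i ω) = ∑ i, ent P (Y i) := by
  unfold ent
  rw [Finset.sum_congr rfl fun x (_ : x ∈ Finset.univ) => by rw [h x]]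
  have key : ∀ x : ∀ i, κ i,
      (∏ i, pr P (Y i) (x i)) * Real.logb 2 (∏ i, pr P (Y i) (x i))
      = ∑ k, (∏ i, pr P (Y i) (x i)) * Real.logb 2 (pr P (Y k) (x k)) := by
    intro x
    by_cases hx : ∀ i, pr P (Y i) (x i) ≠ 0
    · rw [Real.logb_prod _ _ fun i _ => hx i, Finset.mul_sum]
    · push_neg at hx
      obtain ⟨i0, hi0⟩ := hx
      have hprod : ∏ i, pr P (Y i) (x i) = 0 :=
        Finset.prod_eq_zero (Finset.mem_univ i0) hi0
      simp [hprod]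
  rw [Finset.sum_congr rfl fun x (_ : x ∈ Finset.univ) => key x, Finset.sum_comm]
  rw [neg_eq_iff_eq_neg, ← Finset.sum_neg_distrib]
  refine Finset.sum_congr rfl fun k _ => ?_
  rw [neg_neg]
  set g : ∀ i : ι, κ i → ℝ := fun i v =>
    if hk : i = k then pr P (Y i) v * Real.logb 2 (pr P (Y k) (hk ▸ v)) else pr P (Y i) v
    with hg
  have split : ∀ x : ∀ i, κ i, (∏ i, pr P (Y i) (x i)) * Real.logb 2 (pr P (Y k) (x k))
      = ∏ i, g i (x i) := by
    intro x
    have rhs : ∏ i, g i (x i)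
        = (pr P (Y k) (x k) * Real.logb 2 (pr P (Y k) (x k)))
            * ∏ i ∈ Finset.univ \ {k}, pr P (Y i) (x i) := by
      rw [Finset.prod_eq_mul_prod_sdiff_singleton_of_mem (Finset.mem_univ k)]
      have h1 : g k (x k) = pr P (Y k) (x k) * Real.logb 2 (pr P (Y k) (x k)) := by
        rw [hg]; simp
      have h2 : ∀ i ∈ Finset.univ \ {k}, g i (x i) = pr P (Y i) (x i) := by
        intro i hi
        have : i ≠ k := by simpa using (Finset.mem_sdiff.mp hi).2
        rw [hg]; simp [this]
      rw [h1, Finset.prod_congr rfl h2]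
    rw [rhs, Finset.prod_eq_mul_prod_sdiff_singleton_of_mem (Finset.mem_univ k)
      (fun i => pr P (Y i) (x i))]
    ring
  rw [Finset.sum_congr rfl fun x (_ : x ∈ Finset.univ) => split x]
  have hps := Finset.prod_univ_sum (fun i : ι => (Finset.univ : Finset (κ i))) g
  rw [Fintype.piFinset_univ] at hps
  rw [← hps]
  have hone : ∀ i ∈ Finset.univ \ {k}, (∑ v ∈ Finset.univ, g i v) = 1 := by
    intro i hi
    have hik : i ≠ k := by simpa using (Finset.mem_sdiff.mp hi).2
    rw [hg]
    simp only [dif_neg hik]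
    exact sum_pr hP1 (Y i)
  rw [Finset.prod_eq_mul_prod_sdiff_singleton_of_mem (Finset.mem_univ k), Finset.prod_congr rfl hone]
  rw [hg]
  simp

section main

variable {Ω : Type*} [Fintype Ω] {P : Ω → ℝ} {r b : ℕ} {𝒳 : Fin r → Type*} [∀ i, Fintype (𝒳 i)]

/-- The random variable `W_k = (X_{<k}, B)`. -/
noncomputable def V (X : ∀ i, Ω → 𝒳 i) (B : Ω → Fin (2 ^ b)) (k : ℕ) (ω : Ω) :
    (∀ j : {j : Fin r // (j : ℕ) < k}, 𝒳 j.1) × Fin (2 ^ b) :=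
  (fun j => X j.1 ω, B ω)

noncomputable def extendF (𝒳 : Fin r → Type*) (i : Fin r) (a : 𝒳 i)
    (p : ∀ j : {j : Fin r // (j : ℕ) < (i : ℕ)}, 𝒳 j.1) :
    ∀ j : {j : Fin r // (j : ℕ) < (i : ℕ) + 1}, 𝒳 j.1 :=
  fun j =>
    if h : (j.1 : ℕ) < (i : ℕ) then p ⟨j.1, h⟩
    else
      cast (congrArg 𝒳 (Fin.ext (Nat.le_antisymm (Nat.not_lt.mp h) (Nat.lt_succ_iff.mp j.2)) :
        i = j.1)) a

lemma gmap_inj (i : Fin r) :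
    Function.Injective (fun apβ : 𝒳 i ×
        ((∀ j : {j : Fin r // (j : ℕ) < (i : ℕ)}, 𝒳 j.1) × Fin (2 ^ b)) =>
      ((extendF 𝒳 i apβ.1 apβ.2.1, apβ.2.2) :
        (∀ j : {j : Fin r // (j : ℕ) < (i : ℕ) + 1}, 𝒳 j.1) × Fin (2 ^ b))) := by
  rintro ⟨a, p, β⟩ ⟨a', p', β'⟩ h
  simp only [Prod.mk.injEq] at h
  obtain ⟨hE, hβ⟩ := h
  have ha : a = a' := by
    have h0 := congrFun hE ⟨i, Nat.lt_succ_self _⟩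
    simp only [extendF] at h0
    rw [dif_neg (lt_irrefl _), dif_neg (lt_irrefl _)] at h0
    exact (cast_inj _).mp h0
  have hp : p = p' := by
    funext j
    obtain ⟨jv, hj⟩ := j
    have h0 := congrFun hE ⟨jv, hj.trans (Nat.lt_succ_self _)⟩
    simp only [extendF] at h0
    rw [dif_pos hj, dif_pos hj] at h0
    exact h0
  simp [ha, hp, hβ]

lemma gmap_comm (X : ∀ i, Ω → 𝒳 i) (B : Ω → Fin (2 ^ b)) (i : Fin r) (ω : Ω) :
    ((extendF 𝒳 i (X i ω) (fun j => X j.1 ω), B ω) :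
      (∀ j : {j : Fin r // (j : ℕ) < (i : ℕ) + 1}, 𝒳 j.1) × Fin (2 ^ b))
      = V X B ((i : ℕ) + 1) ω := by
  unfold V
  refine Prod.ext ?_ rfl
  funext j
  obtain ⟨jv, hj⟩ := j
  simp only [extendF]
  by_cases h : (jv : ℕ) < (i : ℕ)
  · rw [dif_pos h]
  · rw [dif_neg h]
    have e : i = jv := Fin.ext (Nat.le_antisymm (Nat.not_lt.mp h) (Nat.lt_succ_iff.mp hj))
    subst e
    rw [cast_eq]

lemma ent_pair_step (X : ∀ i, Ω → 𝒳 i) (B : Ω → Fin (2 ^ b)) (i : Fin r) :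
    ent P (fun ω => (X i ω, V X B (i : ℕ) ω)) = ent P (V X B ((i : ℕ) + 1)) :=
  (ent_comp_inj (fun ω => (X i ω, V X B (i : ℕ) ω)) (V X B ((i : ℕ) + 1)) _
    (gmap_inj i) (fun ω => gmap_comm X B i ω)).symm

lemma ent_V_zero (X : ∀ i, Ω → 𝒳 i) (B : Ω → Fin (2 ^ b)) :
    ent P B = ent P (V X B 0) := by
  haveI : IsEmpty {j : Fin r // (j : ℕ) < 0} := ⟨fun j => Nat.not_lt_zero _ j.2⟩
  exact ent_comp_inj (V X B 0) B Prod.snd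
    (fun x y h => Prod.ext (Subsingleton.elim _ _) h) (fun ω => rfl)

lemma ent_V_top (X : ∀ i, Ω → 𝒳 i) (B : Ω → Fin (2 ^ b)) (hP0 : ∀ ω, 0 ≤ P ω) :
    ent P (fun ω i => X i ω) ≤ ent P (V X B r) := by
  have h1 : ent P (fun ω i => X i ω) = ent P (fun ω => (fun j : {j : Fin r // (j : ℕ) < r} => X j.1 ω)) := by
    refine (ent_comp_inj (fun ω i => X i ω)
      (fun ω => (fun j : {j : Fin r // (j : ℕ) < r} => X j.1 ω))
      (fun x j => x j.1) ?_ (fun ω => rfl)).symm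
    intro x y h
    funext i
    exact congrFun h ⟨i, i.2⟩
  rw [h1]
  exact ent_le_ent_pair (fun ω => (fun j : {j : Fin r // (j : ℕ) < r} => X j.1 ω)) B hP0


lemma d_eq_mi (hP0 : ∀ ω, 0 ≤ P ω) (X : ∀ i, Ω → 𝒳 i) (B : Ω → Fin (2 ^ b)) (i : Fin r) :
    ∑ w, pr P (V X B (i : ℕ)) w * klBits
        (fun x => prOf P (fun ω => X i ω = x ∧ V X B (i : ℕ) ω = w) / pr P (V X B (i : ℕ)) w)
        (fun x => pr P (X i) x)
      = ent P (X i) + ent P (V X B (i : ℕ)) - ent P (fun ω => (X i ω, V X B (i : ℕ) ω)) := by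
  rw [← mi_eq (X i) (V X B (i : ℕ)) hP0, Finset.sum_comm]
  refine Finset.sum_congr rfl fun w _ => ?_
  rw [klBits, Finset.mul_sum]
  refine Finset.sum_congr rfl fun x _ => ?_
  set pw := pr P (V X B (i : ℕ)) w with hpw
  set j := prOf P (fun ω => X i ω = x ∧ V X B (i : ℕ) ω = w) with hjdef
  set a := pr P (X i) x with ha
  rcases eq_or_lt_of_le (pr_nonneg hP0 (V X B (i : ℕ)) w) with hz | hpos
  · have hjle : j ≤ pw := prOf_mono hP0 fun ω hw => hw.2
    have hj : j = 0 := le_antisymm (hjle.trans_eq hz.symm)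
      (prOf_nonneg hP0 _)
    have hpw0 : pw = 0 := by rw [hpw, ← hz]
    rw [hj, hpw0]
    simp
  · have hpw0 : pw ≠ 0 := ne_of_gt hpos
    have h3 : j / pw / a = j / (a * pw) := by rw [div_div, mul_comm pw a]
    rw [h3, ← mul_assoc, mul_div_cancel₀ j hpw0]

lemma sum_mi_le (hP0 : ∀ ω, 0 ≤ P ω) (hP1 : ∑ ω, P ω = 1)
    (X : ∀ i, Ω → 𝒳 i) (B : Ω → Fin (2 ^ b))
    (hindep : ∀ x : ∀ i, 𝒳 i, pr P (fun ω i => X i ω) x = ∏ i, pr P (X i) (x i)) :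
    ∑ i : Fin r, (ent P (X i) + ent P (V X B (i : ℕ))
        - ent P (fun ω => (X i ω, V X B (i : ℕ) ω)))
      ≤ (b : ℝ) := by
  have htele : ∀ i : Fin r,
      ent P (fun ω => (X i ω, V X B (i : ℕ) ω)) = ent P (V X B ((i : ℕ) + 1)) :=
    ent_pair_step X B
  have hsplit : ∑ i : Fin r, (ent P (X i) + ent P (V X B (i : ℕ))
        - ent P (fun ω => (X i ω, V X B (i : ℕ) ω)))
      = (∑ i : Fin r, ent P (X i))
        + ∑ i : Fin r, (ent P (V X B (i : ℕ)) - ent P (V X B ((i : ℕ) + 1))) := by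
    rw [← Finset.sum_add_distrib]
    refine Finset.sum_congr rfl fun i _ => ?_
    rw [htele i]
    ring
  have htel2 : ∑ i : Fin r, (ent P (V X B (i : ℕ)) - ent P (V X B ((i : ℕ) + 1)))
      = ent P (V X B 0) - ent P (V X B r) := by
    rw [Fin.sum_univ_eq_sum_range (fun k => ent P (V X B k) - ent P (V X B (k + 1))) r]
    exact Finset.sum_range_sub' (fun k => ent P (V X B k)) r
  have hB : ent P (V X B 0) ≤ (b : ℝ) := by
    rw [← ent_V_zero X B]
    have hcard : (0 : ℝ) < (Fintype.card (Fin (2 ^ b)) : ℝ) := by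
      have : (0:ℕ) < Fintype.card (Fin (2 ^ b)) := by simp [Fintype.card_fin]
      exact_mod_cast this
    have := ent_le_logb_card hP0 hP1 hcard B
    have hval : Real.logb 2 ((Fintype.card (Fin (2 ^ b)) : ℝ)) = (b : ℝ) := by
      rw [Fintype.card_fin]
      push_cast
      rw [Real.logb_pow, Real.logb_self_eq_one (by norm_num : (1:ℝ) < 2)]
      ring
    linarith
  have hX : (∑ i : Fin r, ent P (X i)) ≤ ent P (V X B r) := by
    rw [← ent_indep hP1 X hindep]
    exact ent_V_top X B hP0
  rw [hsplit, htel2]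
  linarith

end main

end DPaux

open DPaux in
/-- Information-theoretic direct product theorem for maximization (appendix Theorem). -/
theorem direct_product_max
    {Ω : Type*} [Fintype Ω] (P : Ω → ℝ)
    (hP0 : ∀ ω, 0 ≤ P ω) (hP1 : ∑ ω, P ω = 1)
    {r b : ℕ} (hr : 1 ≤ r)
    {𝒳 : Fin r → Type*} [∀ i, Fintype (𝒳 i)]
    (X : ∀ i, Ω → 𝒳 i)
    (hindep : ∀ x : ∀ i, 𝒳 i,
      prOf P (fun ω => ∀ i, X i ω = x i) = ∏ i, prOf P (fun ω => X i ω = x i))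
    (B : Ω → Fin (2 ^ b))
    (score : Fin r → Ω → ℝ) (hscore : ∀ i ω, 0 ≤ score i ω)
    (f : ℝ → ℝ) (hconc : ConcaveOn ℝ (Set.Ici 0) f) (hmono : MonotoneOn f (Set.Ici 0))
    (hub : ∀ (i : Fin r) (w : ((j : {j : Fin r // j < i}) → 𝒳 j.1) × Fin (2 ^ b)),
      0 < prOf P (fun ω => ((fun j : {j : Fin r // j < i} => X j.1 ω), B ω) = w) →
      (∑ ω, (if ((fun j : {j : Fin r // j < i} => X j.1 ω), B ω) = w then P ω else 0) * score i ω) /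
          prOf P (fun ω => ((fun j : {j : Fin r // j < i} => X j.1 ω), B ω) = w)
        ≤ f (klBits
            (fun x : 𝒳 i =>
              prOf P (fun ω => X i ω = x ∧ ((fun j : {j : Fin r // j < i} => X j.1 ω), B ω) = w) /
                prOf P (fun ω => ((fun j : {j : Fin r // j < i} => X j.1 ω), B ω) = w))
            (fun x : 𝒳 i => prOf P (fun ω => X i ω = x)))) :
    ∑ ω, P ω * ∑ i, score i ω ≤ (r : ℝ) * f ((b : ℝ) / (r : ℝ)) := by
  classical
  have hrR : (0 : ℝ) < (r : ℝ) := by exact_mod_cast Nat.lt_of_lt_of_le Nat.zero_lt_one hr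
  -- KL nonnegativity per (i, w)
  have hKL : ∀ (i : Fin r) (w : (∀ j : {j : Fin r // (j : ℕ) < (i : ℕ)}, 𝒳 j.1) × Fin (2 ^ b)),
      0 ≤ klBits
        (fun x => prOf P (fun ω => X i ω = x ∧ V X B (i : ℕ) ω = w) / pr P (V X B (i : ℕ)) w)
        (fun x => pr P (X i) x) := by
    intro i w
    rcases eq_or_lt_of_le (pr_nonneg hP0 (V X B (i : ℕ)) w) with hz | hpos
    · have hall : ∀ x : 𝒳 i,
          prOf P (fun ω => X i ω = x ∧ V X B (i : ℕ) ω = w) / pr P (V X B (i : ℕ)) w = 0 := by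
        intro x; rw [← hz, div_zero]
      rw [klBits]
      exact le_of_eq (Finset.sum_eq_zero fun x _ => by rw [hall x, zero_mul]).symm
    · refine gibbs _ _ (fun x => div_nonneg (prOf_nonneg hP0 _) hpos.le) ?_
        (fun x => pr_nonneg hP0 _ _) (le_of_eq (sum_pr hP1 (X i))) ?_
      · have hs : ∑ x, prOf P (fun ω => X i ω = x ∧ V X B (i : ℕ) ω = w)
            = pr P (V X B (i : ℕ)) w := prOf_sum_fiber' (X i) _
        rw [← Finset.sum_div, hs, div_self (ne_of_gt hpos)]
      · intro x hx0
        have h1 : prOf P (fun ω => X i ω = x ∧ V X B (i : ℕ) ω = w) ≤ pr P (X i) x :=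
          prOf_mono hP0 fun ω hw => hw.1
        have h2 : prOf P (fun ω => X i ω = x ∧ V X B (i : ℕ) ω = w) = 0 :=
          le_antisymm (h1.trans_eq hx0) (prOf_nonneg hP0 _)
        rw [h2, zero_div]
  -- per-(i,w) bound from the hypothesis
  have hperw : ∀ (i : Fin r) (w : (∀ j : {j : Fin r // (j : ℕ) < (i : ℕ)}, 𝒳 j.1) × Fin (2 ^ b)),
      (∑ ω, (if V X B (i : ℕ) ω = w then P ω else 0) * score i ω)
        ≤ pr P (V X B (i : ℕ)) w * f (klBits
            (fun x => prOf P (fun ω => X i ω = x ∧ V X B (i : ℕ) ω = w) /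
              pr P (V X B (i : ℕ)) w)
            (fun x => pr P (X i) x)) := by
    intro i w
    rcases eq_or_lt_of_le (pr_nonneg hP0 (V X B (i : ℕ)) w) with hz | hpos
    · have hnum : (∑ ω, (if V X B (i : ℕ) ω = w then P ω else 0) * score i ω) = 0 :=
        Finset.sum_eq_zero fun ω _ => by
          by_cases hV : V X B (i : ℕ) ω = w
          · rw [if_pos hV, prOf_eq_zero_imp hP0 hz.symm ω hV, zero_mul]
          · rw [if_neg hV, zero_mul]
      rw [hnum, ← hz, zero_mul]
    · have h1 : (∑ ω, (if V X B (i : ℕ) ω = w then P ω else 0) * score i ω) /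
          pr P (V X B (i : ℕ)) w
          ≤ f (klBits
            (fun x => prOf P (fun ω => X i ω = x ∧ V X B (i : ℕ) ω = w) /
              pr P (V X B (i : ℕ)) w)
            (fun x => pr P (X i) x)) := hub i w hpos
      have h2 : (∑ ω, (if V X B (i : ℕ) ω = w then P ω else 0) * score i ω)
          = pr P (V X B (i : ℕ)) w *
            ((∑ ω, (if V X B (i : ℕ) ω = w then P ω else 0) * score i ω) /
              pr P (V X B (i : ℕ)) w) := by
        rw [mul_div_cancel₀ _ (ne_of_gt hpos)]
      rw [h2]
      exact mul_le_mul_of_nonneg_left h1 hpos.le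
  -- per-i bound via Jensen
  have hstep2 : ∀ i : Fin r, (∑ ω, P ω * score i ω) ≤
      f (∑ w, pr P (V X B (i : ℕ)) w * klBits
          (fun x => prOf P (fun ω => X i ω = x ∧ V X B (i : ℕ) ω = w) /
            pr P (V X B (i : ℕ)) w)
          (fun x => pr P (X i) x)) := by
    intro i
    have hdecomp : (∑ ω, P ω * score i ω)
        = ∑ w, ∑ ω, (if V X B (i : ℕ) ω = w then P ω else 0) * score i ω := by
      rw [Finset.sum_comm]
      refine Finset.sum_congr rfl fun ω _ => ?_
      rw [← Finset.sum_mul]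
      congr 1
      simp
    have hjen := hconc.le_map_sum (t := Finset.univ)
      (w := fun w => pr P (V X B (i : ℕ)) w)
      (p := fun w => klBits
          (fun x => prOf P (fun ω => X i ω = x ∧ V X B (i : ℕ) ω = w) /
            pr P (V X B (i : ℕ)) w)
          (fun x => pr P (X i) x))
      (fun w _ => pr_nonneg hP0 _ w) (sum_pr hP1 (V X B (i : ℕ)))
      (fun w _ => Set.mem_Ici.mpr (hKL i w))
    simp only [smul_eq_mul] at hjen
    calc (∑ ω, P ω * score i ω)
        = ∑ w, ∑ ω, (if V X B (i : ℕ) ω = w then P ω else 0) * score i ω := hdecomp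
      _ ≤ ∑ w, pr P (V X B (i : ℕ)) w * f (klBits
            (fun x => prOf P (fun ω => X i ω = x ∧ V X B (i : ℕ) ω = w) /
              pr P (V X B (i : ℕ)) w)
            (fun x => pr P (X i) x)) := Finset.sum_le_sum fun w _ => hperw i w
      _ ≤ _ := hjen
  -- the sum of the "informations" is at most b
  have hindep' : ∀ x : ∀ i, 𝒳 i, pr P (fun ω i => X i ω) x = ∏ i, pr P (X i) (x i) := by
    intro x
    have h2 : pr P (fun ω i => X i ω) x = prOf P (fun ω => ∀ i, X i ω = x i) :=
      prOf_congr fun ω => funext_iff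
    exact h2.trans (hindep x)
  have hdb : ∑ i : Fin r, (∑ w, pr P (V X B (i : ℕ)) w * klBits
        (fun x => prOf P (fun ω => X i ω = x ∧ V X B (i : ℕ) ω = w) /
          pr P (V X B (i : ℕ)) w)
        (fun x => pr P (X i) x)) ≤ (b : ℝ) := by
    calc ∑ i : Fin r, (∑ w, pr P (V X B (i : ℕ)) w * klBits
          (fun x => prOf P (fun ω => X i ω = x ∧ V X B (i : ℕ) ω = w) /
            pr P (V X B (i : ℕ)) w)
          (fun x => pr P (X i) x))
        = ∑ i : Fin r, (ent P (X i) + ent P (V X B (i : ℕ))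
            - ent P (fun ω => (X i ω, V X B (i : ℕ) ω))) :=
          Finset.sum_congr rfl fun i _ => d_eq_mi hP0 X B i
      _ ≤ (b : ℝ) := sum_mi_le hP0 hP1 X B hindep'
  have hd0 : ∀ i : Fin r, 0 ≤ ∑ w, pr P (V X B (i : ℕ)) w * klBits
      (fun x => prOf P (fun ω => X i ω = x ∧ V X B (i : ℕ) ω = w) /
        pr P (V X B (i : ℕ)) w)
      (fun x => pr P (X i) x) :=
    fun i => Finset.sum_nonneg fun w _ => mul_nonneg (pr_nonneg hP0 _ w) (hKL i w)
  -- assemble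
  set d : Fin r → ℝ := fun i => ∑ w, pr P (V X B (i : ℕ)) w * klBits
      (fun x => prOf P (fun ω => X i ω = x ∧ V X B (i : ℕ) ω = w) /
        pr P (V X B (i : ℕ)) w)
      (fun x => pr P (X i) x) with hd
  have hswap : ∑ ω, P ω * ∑ i, score i ω = ∑ i, ∑ ω, P ω * score i ω := by
    simp only [Finset.mul_sum]
    exact Finset.sum_comm
  have hjen2 := hconc.le_map_sum (t := Finset.univ) (w := fun _ : Fin r => (r : ℝ)⁻¹)
    (p := d) (fun i _ => by positivity)
    (by simp [Finset.sum_const, Finset.card_univ]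
        exact mul_inv_cancel₀ (ne_of_gt hrR))
    (fun i _ => Set.mem_Ici.mpr (hd0 i))
  simp only [smul_eq_mul, ← Finset.mul_sum] at hjen2
  have hT0 : 0 ≤ ∑ i, d i := Finset.sum_nonneg fun i _ => hd0 i
  have hmono2 : f ((r : ℝ)⁻¹ * ∑ i, d i) ≤ f ((b : ℝ) / (r : ℝ)) := by
    refine hmono (Set.mem_Ici.mpr (mul_nonneg (by positivity) hT0))
      (Set.mem_Ici.mpr (by positivity)) ?_
    rw [inv_mul_eq_div]
    gcongr
  calc ∑ ω, P ω * ∑ i, score i ω = ∑ i, ∑ ω, P ω * score i ω := hswap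
    _ ≤ ∑ i, f (d i) := Finset.sum_le_sum fun i _ => hstep2 i
    _ = (r : ℝ) * ((r : ℝ)⁻¹ * ∑ i, f (d i)) := by field_simp
    _ ≤ (r : ℝ) * f ((r : ℝ)⁻¹ * ∑ i, d i) := mul_le_mul_of_nonneg_left hjen2 hrR.le
    _ ≤ (r : ℝ) * f ((b : ℝ) / (r : ℝ)) := mul_le_mul_of_nonneg_left hmono2 hrR.le
end

section
/- Round-repetition upper bound for maximization (core of the appendix Lemma, maximization version). Let I be a nonempty finite set, p a probability distribution on I, r ≥ 1 and b natural numbers, M ≥ 0 and t real. Equip I^r with the product measure p^r. Let B : I^r → Fin (2^b) be an arbitrary function, and for each 1 ≤ i ≤ r let G_i : I^{i−1} × Fin (2^b) × I → ℝ satisfy 0 ≤ G_i(h,a,x) ≤ M for all arguments and Σ_{x ∈ I} p(x)·G_i(h,a,x) ≤ t for every h ∈ I^{i−1} and a ∈ Fin (2^b). Then E_{σ ∼ p^r}[ Σ_{i=1}^r G_i( (σ₁,…,σ_{i−1}), B(σ), σ_i ) ] ≤ r · ( t + 2M·√(b/r) ). -/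
open Classical

set_option maxHeartbeats 2000000

lemma rru_sumP {I : Type*} [Fintype I] {r : ℕ} (p : I → ℝ) (hp1 : ∑ x, p x = 1) :
    ∑ σ : Fin r → I, ∏ j, p (σ j) = 1 := by
  rw [← Fintype.prod_sum (fun (_ : Fin r) (x : I) => p x)]
  simp [hp1]

lemma rru_step {I : Type*} [Fintype I] {r : ℕ} (p : I → ℝ) (hp1 : ∑ x, p x = 1)
    (K : Fin r) (F : (Fin r → I) → I → ℝ)
    (hF : ∀ σ x y, F (Function.update σ K y) x = F σ x) :
    ∑ σ : Fin r → I, (∏ j, p (σ j)) * F σ (σ K)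
      = ∑ σ : Fin r → I, (∏ j, p (σ j)) * ∑ x, p x * F σ x := by
  have he : Function.Bijective
      (fun q : (Fin r → I) × I => (Function.update q.1 K q.2, q.1 K)) := by
    apply Function.Involutive.bijective
    rintro ⟨σ, x⟩
    simp [Function.update_idem]
  have h2 : ∀ (σ : Fin r → I) (x : I),
      (∏ j, p (Function.update σ K x j)) * p (σ K) = (∏ j, p (σ j)) * p x := by
    intro σ x
    have hv : ∀ j, p (Function.update σ K x j)
        = Function.update (fun k => p (σ k)) K (p x) j := fun j =>
      Function.apply_update (fun _ y => p y) σ K x j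
    simp_rw [hv]
    rw [Finset.prod_update_of_mem (Finset.mem_univ K),
      Finset.prod_eq_mul_prod_sdiff_singleton_of_mem (Finset.mem_univ K) (fun j => p (σ j))]
    ring
  have key : ∀ q : (Fin r → I) × I,
      (∏ j, p (q.1 j)) * (p q.2 * F q.1 q.2)
        = (∏ j, p (Function.update q.1 K q.2 j)) *
            (p (q.1 K) * F (Function.update q.1 K q.2) (Function.update q.1 K q.2 K)) := by
    rintro ⟨σ, x⟩
    dsimp only
    rw [Function.update_self, hF]
    linear_combination (F σ x) * (h2 σ x).symm
  symm
  calc ∑ σ : Fin r → I, (∏ j, p (σ j)) * ∑ x, p x * F σ x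
      = ∑ σ : Fin r → I, ∑ x : I, (∏ j, p (σ j)) * (p x * F σ x) := by
        simp [Finset.mul_sum]
    _ = ∑ q : (Fin r → I) × I, (∏ j, p (q.1 j)) * (p q.2 * F q.1 q.2) :=
        (Fintype.sum_prod_type (fun q : (Fin r → I) × I => (∏ j, p (q.1 j)) * (p q.2 * F q.1 q.2))).symm
    _ = ∑ q : (Fin r → I) × I, (∏ j, p (q.1 j)) * (p q.2 * F q.1 (q.1 K)) :=
        Fintype.sum_bijective _ he _ _ key
    _ = ∑ σ : Fin r → I, ∑ x : I, (∏ j, p (σ j)) * (p x * F σ (σ K)) :=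
        Fintype.sum_prod_type (fun q : (Fin r → I) × I => (∏ j, p (q.1 j)) * (p q.2 * F q.1 (q.1 K)))
    _ = ∑ σ : Fin r → I, (∏ j, p (σ j)) * F σ (σ K) := by
        refine Finset.sum_congr rfl fun σ _ => ?_
        calc ∑ x : I, (∏ j, p (σ j)) * (p x * F σ (σ K))
            = ∑ x : I, p x * ((∏ j, p (σ j)) * F σ (σ K)) :=
              Finset.sum_congr rfl fun x _ => by ring
          _ = (∑ x : I, p x) * ((∏ j, p (σ j)) * F σ (σ K)) :=
              (Finset.sum_mul _ _ _).symm
          _ = (∏ j, p (σ j)) * F σ (σ K) := by rw [hp1, one_mul]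

lemma rru_lin {I : Type*} [Fintype I] (p : I → ℝ) (hp0 : ∀ x, 0 ≤ p x)
    (hp1 : ∑ x, p x = 1) {r : ℕ}
    (g : ∀ i : Fin r, ({j : Fin r // j < i} → I) → I → ℝ) (t : ℝ)
    (hgt : ∀ i h, ∑ x, p x * g i h x ≤ t) :
    ∑ σ : Fin r → I, (∏ j, p (σ j)) * ∑ i, g i (fun j => σ j.1) (σ i)
      ≤ (r : ℝ) * t := by
  have main : ∀ k : ℕ, k ≤ r →
      ∑ σ : Fin r → I, (∏ j, p (σ j)) *
        ∑ i ∈ Finset.univ.filter (fun i : Fin r => (i : ℕ) < k),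
          g i (fun j => σ j.1) (σ i) ≤ (k : ℝ) * t := by
    intro k
    induction k with
    | zero =>
      intro _
      simp
    | succ k ih =>
      intro hk1
      have hkr : k < r := lt_of_lt_of_le (Nat.lt_succ_self k) hk1
      set K : Fin r := ⟨k, hkr⟩ with hK
      have hfil : Finset.univ.filter (fun i : Fin r => (i : ℕ) < k + 1)
          = insert K (Finset.univ.filter (fun i : Fin r => (i : ℕ) < k)) := by
        ext i
        simp [Nat.lt_succ_iff_lt_or_eq, Fin.ext_iff, hK, or_comm]
        omega
      have hKnot : K ∉ Finset.univ.filter (fun i : Fin r => (i : ℕ) < k) := by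
        simp [hK]
      have hne : ∀ (i : Fin r), (i : ℕ) ≤ k → ∀ (j : {j : Fin r // j < i}), j.1 ≠ K := by
        intro i hi j
        exact Fin.ne_of_val_ne (Nat.ne_of_lt (lt_of_lt_of_le j.2 hi))
      have hinv : ∀ (σ : Fin r → I) (y : I) (i : Fin r), (i : ℕ) ≤ k →
          (fun j : {j : Fin r // j < i} => Function.update σ K y j.1)
            = (fun j : {j : Fin r // j < i} => σ j.1) := by
        intro σ y i hi
        funext j
        exact Function.update_of_ne (hne i hi j) _ _
      rw [show ((k+1 : ℕ) : ℝ) * t = t + (k : ℝ) * t by push_cast; ring]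
      calc ∑ σ : Fin r → I, (∏ j, p (σ j)) *
              ∑ i ∈ Finset.univ.filter (fun i : Fin r => (i : ℕ) < k + 1),
                g i (fun j => σ j.1) (σ i)
          = ∑ σ : Fin r → I, ((∏ j, p (σ j)) * g K (fun j => σ j.1) (σ K)
              + (∏ j, p (σ j)) *
                ∑ i ∈ Finset.univ.filter (fun i : Fin r => (i : ℕ) < k),
                  g i (fun j => σ j.1) (σ i)) := by
            refine Finset.sum_congr rfl fun σ _ => ?_
            rw [hfil, Finset.sum_insert hKnot]
            ring
        _ = (∑ σ : Fin r → I, (∏ j, p (σ j)) * g K (fun j => σ j.1) (σ K))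
              + ∑ σ : Fin r → I, (∏ j, p (σ j)) *
                ∑ i ∈ Finset.univ.filter (fun i : Fin r => (i : ℕ) < k),
                  g i (fun j => σ j.1) (σ i) := Finset.sum_add_distrib
        _ ≤ t + (k : ℝ) * t := by
            gcongr ?_ + ?_
            · rw [rru_step p hp1 K (fun σ x => g K (fun j => σ j.1) x)
                (fun σ x y =>
                  show g K (fun j : {j : Fin r // j < K} => Function.update σ K y j.1) x
                      = g K (fun j : {j : Fin r // j < K} => σ j.1) x by
                    rw [hinv σ y K le_rfl])]
              calc ∑ σ : Fin r → I, (∏ j, p (σ j)) * ∑ x, p x * g K (fun j => σ j.1) x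
                  ≤ ∑ σ : Fin r → I, (∏ j, p (σ j)) * t := by
                    refine Finset.sum_le_sum fun σ _ => ?_
                    exact mul_le_mul_of_nonneg_left (hgt K _)
                      (Finset.prod_nonneg fun j _ => hp0 _)
                _ = t := by rw [← Finset.sum_mul, rru_sumP p hp1, one_mul]
            · exact ih (le_of_lt hkr)
  have := main r le_rfl
  have hfil : Finset.univ.filter (fun i : Fin r => (i : ℕ) < r) = Finset.univ := by
    ext i; simp [i.is_lt]
  rwa [hfil] at this

lemma rru_prod {I : Type*} [Fintype I] (p : I → ℝ) (hp0 : ∀ x, 0 ≤ p x)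
    (hp1 : ∑ x, p x = 1) {r : ℕ}
    (g : ∀ i : Fin r, ({j : Fin r // j < i} → I) → I → ℝ) (C : ℝ)
    (hg0 : ∀ i h x, 0 ≤ g i h x) (hC : 0 ≤ C)
    (hgC : ∀ i h, ∑ x, p x * g i h x ≤ C) :
    ∑ σ : Fin r → I, (∏ j, p (σ j)) * ∏ i, g i (fun j => σ j.1) (σ i)
      ≤ C ^ r := by
  have main : ∀ k : ℕ, k ≤ r →
      ∑ σ : Fin r → I, (∏ j, p (σ j)) *
        ∏ i ∈ Finset.univ.filter (fun i : Fin r => (i : ℕ) < k),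
          g i (fun j => σ j.1) (σ i) ≤ C ^ k := by
    intro k
    induction k with
    | zero =>
      intro _
      simp [rru_sumP p hp1]
    | succ k ih =>
      intro hk1
      have hkr : k < r := lt_of_lt_of_le (Nat.lt_succ_self k) hk1
      set K : Fin r := ⟨k, hkr⟩ with hK
      have hfil : Finset.univ.filter (fun i : Fin r => (i : ℕ) < k + 1)
          = insert K (Finset.univ.filter (fun i : Fin r => (i : ℕ) < k)) := by
        ext i
        simp [Nat.lt_succ_iff_lt_or_eq, Fin.ext_iff, hK, or_comm]
        omega
      have hKnot : K ∉ Finset.univ.filter (fun i : Fin r => (i : ℕ) < k) := by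
        simp [hK]
      have hne : ∀ (i : Fin r), (i : ℕ) ≤ k → ∀ (j : {j : Fin r // j < i}), j.1 ≠ K := by
        intro i hi j
        exact Fin.ne_of_val_ne (Nat.ne_of_lt (lt_of_lt_of_le j.2 hi))
      have hinv : ∀ (σ : Fin r → I) (y : I) (i : Fin r), (i : ℕ) ≤ k →
          (fun j : {j : Fin r // j < i} => Function.update σ K y j.1)
            = (fun j : {j : Fin r // j < i} => σ j.1) := by
        intro σ y i hi
        funext j
        exact Function.update_of_ne (hne i hi j) _ _
    -- rest product invariance
      have hrest : ∀ (σ : Fin r → I) (y : I),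
          (∏ i ∈ Finset.univ.filter (fun i : Fin r => (i : ℕ) < k),
              g i (fun j : {j : Fin r // j < i} => Function.update σ K y j.1)
                (Function.update σ K y i))
            = ∏ i ∈ Finset.univ.filter (fun i : Fin r => (i : ℕ) < k),
                g i (fun j : {j : Fin r // j < i} => σ j.1) (σ i) := by
        intro σ y
        refine Finset.prod_congr rfl fun i hi => ?_
        have hik : (i : ℕ) < k := by simpa using hi
        rw [hinv σ y i (le_of_lt hik),
          Function.update_of_ne (Fin.ne_of_val_ne (Nat.ne_of_lt hik)) _ _]
      have hrest0 : ∀ σ : Fin r → I,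
          0 ≤ ∏ i ∈ Finset.univ.filter (fun i : Fin r => (i : ℕ) < k),
              g i (fun j : {j : Fin r // j < i} => σ j.1) (σ i) :=
        fun σ => Finset.prod_nonneg fun i _ => hg0 _ _ _
      have hstep := rru_step p hp1 K
        (fun σ x => g K (fun j : {j : Fin r // j < K} => σ j.1) x *
          ∏ i ∈ Finset.univ.filter (fun i : Fin r => (i : ℕ) < k),
            g i (fun j : {j : Fin r // j < i} => σ j.1) (σ i))
        (fun σ x y => by
          show g K (fun j : {j : Fin r // j < K} => Function.update σ K y j.1) x * _
              = _
          rw [hinv σ y K le_rfl]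
          exact congrArg _ (by
            refine Finset.prod_congr rfl fun i hi => ?_
            have hik : (i : ℕ) < k := by simpa using hi
            rw [hinv σ y i (le_of_lt hik),
              Function.update_of_ne (Fin.ne_of_val_ne (Nat.ne_of_lt hik)) _ _]))
      calc ∑ σ : Fin r → I, (∏ j, p (σ j)) *
              ∏ i ∈ Finset.univ.filter (fun i : Fin r => (i : ℕ) < k + 1),
                g i (fun j => σ j.1) (σ i)
          = ∑ σ : Fin r → I, (∏ j, p (σ j)) *
              (g K (fun j : {j : Fin r // j < K} => σ j.1) (σ K) *
                ∏ i ∈ Finset.univ.filter (fun i : Fin r => (i : ℕ) < k),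
                  g i (fun j => σ j.1) (σ i)) := by
            refine Finset.sum_congr rfl fun σ _ => ?_
            rw [hfil, Finset.prod_insert hKnot]
        _ = ∑ σ : Fin r → I, (∏ j, p (σ j)) *
              ∑ x, p x * (g K (fun j : {j : Fin r // j < K} => σ j.1) x *
                ∏ i ∈ Finset.univ.filter (fun i : Fin r => (i : ℕ) < k),
                  g i (fun j => σ j.1) (σ i)) := hstep
        _ ≤ ∑ σ : Fin r → I, (∏ j, p (σ j)) *
              (C * ∏ i ∈ Finset.univ.filter (fun i : Fin r => (i : ℕ) < k),
                  g i (fun j => σ j.1) (σ i)) := by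
            refine Finset.sum_le_sum fun σ _ => ?_
            refine mul_le_mul_of_nonneg_left ?_
              (Finset.prod_nonneg fun j _ => hp0 _)
            have : (∑ x, p x * (g K (fun j : {j : Fin r // j < K} => σ j.1) x *
                ∏ i ∈ Finset.univ.filter (fun i : Fin r => (i : ℕ) < k),
                  g i (fun j => σ j.1) (σ i)))
                = (∑ x, p x * g K (fun j : {j : Fin r // j < K} => σ j.1) x) *
                  ∏ i ∈ Finset.univ.filter (fun i : Fin r => (i : ℕ) < k),
                    g i (fun j => σ j.1) (σ i) := by
              rw [Finset.sum_mul]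
              exact Finset.sum_congr rfl fun x _ => by ring
            rw [this]
            exact mul_le_mul_of_nonneg_right (hgC K _) (hrest0 σ)
        _ = C * ∑ σ : Fin r → I, (∏ j, p (σ j)) *
              ∏ i ∈ Finset.univ.filter (fun i : Fin r => (i : ℕ) < k),
                g i (fun j => σ j.1) (σ i) := by
            rw [Finset.mul_sum]
            exact Finset.sum_congr rfl fun σ _ => by ring
        _ ≤ C * C ^ k := mul_le_mul_of_nonneg_left (ih (le_of_lt hkr)) hC
        _ = C ^ (k + 1) := (pow_succ' C k).symm
  have := main r le_rfl
  have hfil : Finset.univ.filter (fun i : Fin r => (i : ℕ) < r) = Finset.univ := by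
    ext i; simp [i.is_lt]
  rwa [hfil] at this

/-- Pointwise convexity bound: for `0 ≤ y ≤ M`, `exp((s/M)y) ≤ 1 + (y/M)(exp s - 1)`. -/
lemma rru_ptw {M s y : ℝ} (hM0 : 0 < M) (hy0 : 0 ≤ y) (hyM : y ≤ M) :
    Real.exp (s / M * y) ≤ 1 + y / M * (Real.exp s - 1) := by
  obtain ⟨θ, hθ⟩ : ∃ θ : ℝ, θ = y / M := ⟨_, rfl⟩
  rw [← hθ]
  have hθ0 : 0 ≤ θ := by rw [hθ]; exact div_nonneg hy0 hM0.le
  have hθ1 : θ ≤ 1 := by rw [hθ]; exact (div_le_one hM0).2 hyM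
  have harg : s / M * y = (1 - θ) • (0:ℝ) + θ • s := by
    simp only [smul_eq_mul, mul_zero, zero_add, hθ]
    field_simp
  have hcv := convexOn_exp.2 (Set.mem_univ (0:ℝ)) (Set.mem_univ s)
    (by linarith : (0:ℝ) ≤ 1 - θ) hθ0 (by ring)
  rw [← harg, Real.exp_zero, smul_eq_mul, smul_eq_mul] at hcv
  nlinarith [hcv]

/-- Single-round MGF bound. -/
lemma rru_round {I : Type*} [Fintype I] (p : I → ℝ) (hp0 : ∀ x, 0 ≤ p x)
    (hp1 : ∑ x, p x = 1) (g : I → ℝ) (M t s : ℝ) (hM0 : 0 < M) (hs0 : 0 ≤ s)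
    (hg0 : ∀ x, 0 ≤ g x) (hgM : ∀ x, g x ≤ M) (hgt : ∑ x, p x * g x ≤ t) :
    ∑ x, p x * Real.exp (s / M * g x) ≤ 1 + t / M * (Real.exp s - 1) := by
  have hE1 : 1 ≤ Real.exp s := by
    calc (1:ℝ) = Real.exp 0 := Real.exp_zero.symm
      _ ≤ Real.exp s := Real.exp_le_exp.2 hs0
  calc ∑ x, p x * Real.exp (s / M * g x)
      ≤ ∑ x, p x * (1 + g x / M * (Real.exp s - 1)) :=
        Finset.sum_le_sum fun x _ =>
          mul_le_mul_of_nonneg_left (rru_ptw hM0 (hg0 x) (hgM x)) (hp0 x)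
    _ = ∑ x, (p x + p x * g x * ((Real.exp s - 1) / M)) :=
        Finset.sum_congr rfl fun x _ => by field_simp
    _ = 1 + (∑ x, p x * g x) * ((Real.exp s - 1) / M) := by
        rw [Finset.sum_add_distrib, hp1, ← Finset.sum_mul]
    _ ≤ 1 + t * ((Real.exp s - 1) / M) := by
        have h1 : 0 ≤ (Real.exp s - 1) / M := div_nonneg (by linarith) hM0.le
        nlinarith [hgt]
    _ = 1 + t / M * (Real.exp s - 1) := by ring

/-- Advice union bound + Jensen: total MGF bound. -/
lemma rru_mgf_total {I : Type*} [Fintype I] (p : I → ℝ) (hp0 : ∀ x, 0 ≤ p x)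
    (hp1 : ∑ x, p x = 1) {r b : ℕ}
    (B : (Fin r → I) → Fin (2 ^ b))
    (Gl : ∀ i : Fin r, ({j : Fin r // j < i} → I) → Fin (2 ^ b) → I → ℝ)
    (C : ℝ) (hC0 : 0 ≤ C)
    (hgC : ∀ i h a, (∑ x, p x * Real.exp (Gl i h a x)) ≤ C) :
    Real.exp (∑ σ : Fin r → I, (∏ j, p (σ j)) *
        ∑ i, Gl i (fun j => σ j.1) (B σ) (σ i))
      ≤ (2 ^ b : ℝ) * C ^ r := by
  have hP0 : ∀ σ : Fin r → I, 0 ≤ ∏ j, p (σ j) :=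
    fun σ => Finset.prod_nonneg fun j _ => hp0 _
  have hmgf : ∀ a : Fin (2 ^ b),
      ∑ σ : Fin r → I, (∏ j, p (σ j)) *
        ∏ i, Real.exp (Gl i (fun j => σ j.1) a (σ i)) ≤ C ^ r := fun a =>
    rru_prod p hp0 hp1 (fun i h x => Real.exp (Gl i h a x)) C
      (fun i h x => (Real.exp_pos _).le) hC0 (fun i h => hgC i h a)
  have hjen : Real.exp (∑ σ : Fin r → I, (∏ j, p (σ j)) *
        ∑ i, Gl i (fun j => σ j.1) (B σ) (σ i))
      ≤ ∑ σ : Fin r → I, (∏ j, p (σ j)) *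
          Real.exp (∑ i, Gl i (fun j => σ j.1) (B σ) (σ i)) := by
    have hjj := convexOn_exp.map_sum_le (t := (Finset.univ : Finset (Fin r → I)))
      (w := fun σ => ∏ j, p (σ j))
      (p := fun σ => ∑ i, Gl i (fun j => σ j.1) (B σ) (σ i))
      (fun σ _ => hP0 σ) (rru_sumP p hp1) (fun σ _ => Set.mem_univ _)
    simpa only [smul_eq_mul] using hjj
  refine hjen.trans ?_
  calc ∑ σ : Fin r → I, (∏ j, p (σ j)) *
        Real.exp (∑ i, Gl i (fun j => σ j.1) (B σ) (σ i))
      ≤ ∑ σ : Fin r → I, ∑ a : Fin (2 ^ b), (∏ j, p (σ j)) *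
          ∏ i, Real.exp (Gl i (fun j => σ j.1) a (σ i)) := by
        refine Finset.sum_le_sum fun σ _ => ?_
        rw [← Finset.mul_sum, Real.exp_sum]
        refine mul_le_mul_of_nonneg_left ?_ (hP0 σ)
        exact Finset.single_le_sum
          (f := fun a : Fin (2 ^ b) => ∏ i, Real.exp (Gl i (fun j => σ j.1) a (σ i)))
          (fun a _ => Finset.prod_nonneg fun i _ => (Real.exp_pos _).le)
          (Finset.mem_univ (B σ))
    _ = ∑ a : Fin (2 ^ b), ∑ σ : Fin r → I, (∏ j, p (σ j)) *
          ∏ i, Real.exp (Gl i (fun j => σ j.1) a (σ i)) := Finset.sum_comm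
    _ ≤ ∑ _a : Fin (2 ^ b), C ^ r := Finset.sum_le_sum fun a _ => hmgf a
    _ = (2 ^ b : ℝ) * C ^ r := by
        rw [Finset.sum_const, Finset.card_univ, Fintype.card_fin, nsmul_eq_mul]
        push_cast
        ring

/-- Final numeric computation. -/
lemma rru_arith {b r M t s : ℝ} (h0r : 0 < r) (hb1 : 1 ≤ b)
    (hM0 : 0 < M) (ht0 : 0 ≤ t) (htM : t ≤ M)
    (hs0 : 0 < s) (hs1 : s ≤ 1) (hb_eq : b = s ^ 2 * r) :
    b * Real.log 2 + r * (t / M * (Real.exp s - 1))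
      ≤ s / M * (r * (t + 2 * M * s)) := by
  have hlog2 : Real.log 2 ≤ 1 := by
    have := Real.log_le_sub_one_of_pos (by norm_num : (0:ℝ) < 2)
    linarith
  have hEb : Real.exp s - 1 ≤ s + 3 / 4 * s ^ 2 := by
    have hb2 := Real.exp_bound (x := s) (by rw [abs_of_nonneg hs0.le]; exact hs1)
      (n := 2) (by norm_num)
    rw [abs_of_nonneg hs0.le] at hb2
    have hsum : ∑ m ∈ Finset.range 2, s ^ m / (m.factorial : ℝ) = 1 + s := by
      simp [Finset.sum_range_succ, Nat.factorial]
    rw [hsum] at hb2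
    have h3 := (abs_sub_le_iff.1 hb2).1
    have h4 : ((2:ℕ).succ : ℝ) / (((2:ℕ).factorial : ℝ) * 2) = 3 / 4 := by
      norm_num [Nat.factorial]
    nlinarith [h3, h4]
  rw [show s / M * (r * (t + 2 * M * s)) = s * (r * (t + 2 * M * s)) / M from by ring,
    le_div_iff₀ hM0]
  have ht_div : t / M * (Real.exp s - 1) * M = t * (Real.exp s - 1) := by field_simp
  have hint1 : r * t * (Real.exp s - 1) ≤ r * t * (s + 3 / 4 * s ^ 2) :=
    mul_le_mul_of_nonneg_left hEb (mul_nonneg h0r.le ht0)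
  have hint2 : b * M * Real.log 2 ≤ b * M :=
    (mul_le_iff_le_one_right (by positivity)).2 hlog2
  have hint3 : 0 ≤ s ^ 2 * r * (M - t) :=
    mul_nonneg (mul_nonneg (sq_nonneg s) h0r.le) (sub_nonneg.2 htM)
  nlinarith [hint1, hint2, hint3, ht_div, hb_eq, hs0.le, ht0, hM0.le]

theorem rru_aux
    {I : Type*} [Fintype I] [Nonempty I]
    (p : I → ℝ) (hp0 : ∀ x, 0 ≤ p x) (hp1 : ∑ x, p x = 1)
    {r b : ℕ} (hr : 1 ≤ r) (M t : ℝ) (hM : 0 ≤ M)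
    (B : (Fin r → I) → Fin (2 ^ b))
    (G : ∀ i : Fin r, ({j : Fin r // j < i} → I) → Fin (2 ^ b) → I → ℝ)
    (hG0 : ∀ i h a x, 0 ≤ G i h a x) (hGM : ∀ i h a x, G i h a x ≤ M)
    (hGt : ∀ i h a, (∑ x, p x * G i h a x) ≤ t)
    (ht0 : 0 ≤ t) (htM : t ≤ M) :
    ∑ σ : Fin r → I, (∏ j, p (σ j)) * ∑ i, G i (fun j => σ j.1) (B σ) (σ i)
      ≤ (r : ℝ) * (t + 2 * M * Real.sqrt ((b : ℝ) / (r : ℝ))) := by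
  have h0r : (0:ℝ) < r := by exact_mod_cast hr
  have hsq0 : 0 ≤ Real.sqrt ((b : ℝ) / (r : ℝ)) := Real.sqrt_nonneg _
  have hP0 : ∀ σ : Fin r → I, 0 ≤ ∏ j, p (σ j) :=
    fun σ => Finset.prod_nonneg fun j _ => hp0 _
  -- trivial bound LHS ≤ r * M
  have htriv : ∑ σ : Fin r → I, (∏ j, p (σ j)) * ∑ i, G i (fun j => σ j.1) (B σ) (σ i)
      ≤ (r : ℝ) * M := by
    calc ∑ σ : Fin r → I, (∏ j, p (σ j)) * ∑ i, G i (fun j => σ j.1) (B σ) (σ i)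
        ≤ ∑ σ : Fin r → I, (∏ j, p (σ j)) * ((r : ℝ) * M) := by
          refine Finset.sum_le_sum fun σ _ => ?_
          refine mul_le_mul_of_nonneg_left ?_ (hP0 σ)
          calc ∑ i, G i (fun j => σ j.1) (B σ) (σ i) ≤ ∑ _i : Fin r, M :=
                Finset.sum_le_sum fun i _ => hGM _ _ _ _
            _ = (r : ℝ) * M := by simp [Finset.sum_const, mul_comm]
      _ = (r : ℝ) * M := by rw [← Finset.sum_mul, rru_sumP p hp1, one_mul]
  rcases Nat.eq_zero_or_pos b with hb0 | hb1
  · -- b = 0 : no advice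
    subst hb0
    haveI : Subsingleton (Fin (2 ^ 0)) := by
      rw [pow_zero]
      infer_instance
    have hBa : ∀ σ : Fin r → I, B σ = B (fun _ => Classical.arbitrary I) :=
      fun σ => Subsingleton.elim _ _
    have heq : ∑ σ : Fin r → I, (∏ j, p (σ j)) * ∑ i, G i (fun j => σ j.1) (B σ) (σ i)
        = ∑ σ : Fin r → I, (∏ j, p (σ j)) *
            ∑ i, G i (fun j => σ j.1) (B (fun _ => Classical.arbitrary I)) (σ i) := by
      refine Finset.sum_congr rfl fun σ _ => by rw [hBa σ]
    rw [heq]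
    have hlin := rru_lin p hp0 hp1
      (fun i h x => G i h (B (fun _ => Classical.arbitrary I)) x) t
      (fun i h => hGt i h _)
    refine hlin.trans ?_
    have : 0 ≤ (r : ℝ) * (2 * M * Real.sqrt (((0:ℕ) : ℝ) / (r : ℝ))) := by positivity
    nlinarith
  rcases le_or_gt (r : ℝ) (4 * b) with hr4b | hr4b
  · -- r ≤ 4b : trivial bound suffices
    refine htriv.trans ?_
    have hhalf : (1:ℝ)/2 ≤ Real.sqrt ((b : ℝ) / (r : ℝ)) := by
      rw [Real.le_sqrt (by norm_num) (by positivity)]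
      rw [le_div_iff₀ h0r]
      nlinarith
    have : M ≤ t + 2 * M * Real.sqrt ((b : ℝ) / (r : ℝ)) := by nlinarith
    nlinarith
  rcases eq_or_lt_of_le hM with hM0 | hM0
  · -- M = 0
    refine htriv.trans ?_
    rw [← hM0]
    nlinarith
  -- main case : 1 ≤ b, 4b < r, 0 < M
  obtain ⟨s, hs⟩ : ∃ s, s = Real.sqrt ((b : ℝ) / (r : ℝ)) := ⟨_, rfl⟩
  rw [← hs]
  have hbr : (b : ℝ) < r := by
    have : (1:ℝ) ≤ b := by exact_mod_cast hb1
    linarith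
  have hs0 : 0 < s := by rw [hs]; exact Real.sqrt_pos.2 (by positivity)
  have hs1 : s ≤ 1 := by rw [hs]; exact Real.sqrt_le_one.2 ((div_le_one h0r).2 hbr.le)
  have hs2 : s ^ 2 = (b : ℝ) / r := by rw [hs]; exact Real.sq_sqrt (by positivity)
  have hb_eq : (b : ℝ) = s ^ 2 * (r : ℝ) := by
    rw [hs2]; field_simp
  obtain ⟨L, hL⟩ : ∃ L : ℝ,
      L = ∑ σ : Fin r → I, (∏ j, p (σ j)) * ∑ i, G i (fun j => σ j.1) (B σ) (σ i) :=
    ⟨_, rfl⟩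
  rw [← hL]
  obtain ⟨C, hC⟩ : ∃ C : ℝ, C = 1 + t / M * (Real.exp s - 1) := ⟨_, rfl⟩
  have hE1 : 1 ≤ Real.exp s := by
    calc (1:ℝ) = Real.exp 0 := Real.exp_zero.symm
      _ ≤ Real.exp s := Real.exp_le_exp.2 hs0.le
  have hC0 : 0 ≤ C := by
    have h1 : 0 ≤ t / M * (Real.exp s - 1) :=
      mul_nonneg (div_nonneg ht0 hM0.le) (by linarith)
    rw [hC]; linarith
  have htot := rru_mgf_total p hp0 hp1 B (fun i h a x => s / M * G i h a x) C hC0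
    (fun i h a => by
      rw [hC]
      exact rru_round p hp0 hp1 (fun x => G i h a x) M t s hM0 hs0.le
        (hG0 i h a) (hGM i h a) (hGt i h a))
  have hLrw : (∑ σ : Fin r → I, (∏ j, p (σ j)) *
        ∑ i, s / M * G i (fun j => σ j.1) (B σ) (σ i)) = s / M * L := by
    rw [hL, Finset.mul_sum]
    refine Finset.sum_congr rfl fun σ _ => ?_
    rw [← Finset.mul_sum]
    ring
  rw [hLrw] at htot
  have hpow : (2 ^ b : ℝ) * C ^ r
      ≤ Real.exp ((b : ℝ) * Real.log 2 + (r : ℝ) * (t / M * (Real.exp s - 1))) := by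
    rw [Real.exp_add]
    have h1 : ((2 : ℝ) ^ b) = Real.exp ((b : ℝ) * Real.log 2) := by
      rw [Real.exp_nat_mul, Real.exp_log (by norm_num : (0:ℝ) < 2)]
    have hCexp : C ≤ Real.exp (t / M * (Real.exp s - 1)) := by
      have := Real.add_one_le_exp (t / M * (Real.exp s - 1))
      rw [hC]; linarith
    have h2 : C ^ r ≤ Real.exp ((r : ℝ) * (t / M * (Real.exp s - 1))) := by
      rw [Real.exp_nat_mul]
      exact pow_le_pow_left₀ hC0 hCexp r
    rw [h1]
    exact mul_le_mul_of_nonneg_left h2 (Real.exp_pos _).le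
  have hlin : s / M * L ≤ (b : ℝ) * Real.log 2 + (r : ℝ) * (t / M * (Real.exp s - 1)) :=
    Real.exp_le_exp.1 (htot.trans hpow)
  have harith := rru_arith (b := (b:ℝ)) (r := (r:ℝ)) h0r
    (by exact_mod_cast hb1) hM0 ht0 htM hs0 hs1 hb_eq
  have hfinal : s / M * L ≤ s / M * ((r : ℝ) * (t + 2 * M * s)) :=
    (hlin.trans harith)
  exact le_of_mul_le_mul_left hfinal (by positivity)


/-- Round-repetition upper bound for maximization (core of the appendix Lemma).
`G i h a x` is the score obtained in round `i` by an algorithm that has seen history `h`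
and advice `a` when the round-`i` input is `x`. -/
theorem round_repetition_upper
    {I : Type*} [Fintype I] [Nonempty I]
    (p : I → ℝ) (hp0 : ∀ x, 0 ≤ p x) (hp1 : ∑ x, p x = 1)
    {r b : ℕ} (hr : 1 ≤ r) (M t : ℝ) (hM : 0 ≤ M)
    (B : (Fin r → I) → Fin (2 ^ b))
    (G : ∀ i : Fin r, ({j : Fin r // j < i} → I) → Fin (2 ^ b) → I → ℝ)
    (hG0 : ∀ i h a x, 0 ≤ G i h a x) (hGM : ∀ i h a x, G i h a x ≤ M)
    (hGt : ∀ i h a, (∑ x, p x * G i h a x) ≤ t) :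
    ∑ σ : Fin r → I, (∏ j, p (σ j)) * ∑ i, G i (fun j => σ j.1) (B σ) (σ i)
      ≤ (r : ℝ) * (t + 2 * M * Real.sqrt ((b : ℝ) / (r : ℝ))) := by
  have h0r : (0:ℝ) < r := by exact_mod_cast hr
  -- replace t by min t M
  set t' := min t M with ht'
  have hGt' : ∀ i h a, (∑ x, p x * G i h a x) ≤ t' := by
    intro i h a
    refine le_min (hGt i h a) ?_
    calc ∑ x, p x * G i h a x ≤ ∑ x, p x * M :=
          Finset.sum_le_sum fun x _ => mul_le_mul_of_nonneg_left (hGM i h a x) (hp0 x)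
      _ = M := by rw [← Finset.sum_mul, hp1, one_mul]
  have ht0 : 0 ≤ t' := by
    have hi : (0 : ℕ) < r := hr
    have hx : I := Classical.arbitrary I
    have := hGt' ⟨0, hi⟩ (fun _ => hx) ⟨0, Nat.two_pow_pos b⟩
    refine le_trans ?_ this
    exact Finset.sum_nonneg fun x _ => mul_nonneg (hp0 x) (hG0 _ _ _ _)
  have htM : t' ≤ M := min_le_right _ _
  have haux := rru_aux p hp0 hp1 hr M t' hM B G hG0 hGM hGt' ht0 htM
  refine haux.trans ?_
  have : t' ≤ t := min_le_left _ _
  nlinarith [Real.sqrt_nonneg ((b : ℝ) / (r : ℝ)), hM, h0r]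
end

section
/- Linear advice lower bound for repeated matrix games (Theorem 3). Let q ≥ 1, n ≥ 1, and b be natural numbers, A : Fin q → Fin q → ℝ≥0 a cost matrix with maximum entry ‖A‖∞ = max_{x,y} A(x,y), V a real, and μ* : Fin q → ℝ a probability vector (μ* ≥ 0, Σ_x μ*(x) = 1) such that Σ_x μ*(x)·A(x,y) ≥ V for every y ∈ Fin q (such μ* exists when V is the value of the one-shot zero-sum game defined by A). Let 0 < ε ≤ V. Let μ be a randomized algorithm reading b bits of advice for the n-round guessing game over Fin q (a PMF over pairs (φ, g) as below), whose cost on input x : Fin n → Fin q for a pair (φ,g) is Σ_{i} A(x_i, y_i) with y_i the answer of (φ,g) in round i. If E_{(φ,g)∼μ}[cost on x] ≤ (V − ε)·n for every input x, then b ≥ ε²·n / (2·ln 2·‖A‖∞²). -/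
open Classical
open scoped NNReal

/-- A deterministic algorithm reading `b` bits of advice for an `n`-round guessing game
with known history over the alphabet `Fin q`: an advice function
`φ : (Fin n → Fin q) → Fin (2^b)` together with an answer function `g` assigning to each
advice value, each round `i`, and each history an answer in `Fin q`. -/
abbrev AdviceAlg (n q b : ℕ) : Type :=
  ((Fin n → Fin q) → Fin (2 ^ b)) ×
    (Fin (2 ^ b) → (i : Fin n) → ({j : Fin n // j < i} → Fin q) → Fin q)

-- pointwise convexity bound
lemma ptwise (M w t : ℝ) (hM : 0 < M) (hw : |w| ≤ M) (ht : 0 ≤ t) :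
    Real.exp (t / M * w) ≤ Real.cosh t + (w / M) * Real.sinh t := by
  obtain ⟨hw1, hw2⟩ := abs_le.1 hw
  have hM' : (M : ℝ) ≠ 0 := ne_of_gt hM
  have key := convexOn_exp.2 (Set.mem_univ (-t)) (Set.mem_univ t)
    (show (0:ℝ) ≤ (M - w) / (2 * M) by apply div_nonneg <;> linarith)
    (show (0:ℝ) ≤ (M + w) / (2 * M) by apply div_nonneg <;> linarith)
    (show (M - w) / (2 * M) + (M + w) / (2 * M) = 1 by field_simp; ring)
  simp only [smul_eq_mul] at key
  have h1 : (M - w) / (2 * M) * (-t) + (M + w) / (2 * M) * t = t / M * w := by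
    field_simp; ring
  have h2 : (M - w) / (2 * M) * Real.exp (-t) + (M + w) / (2 * M) * Real.exp t
      = Real.cosh t + (w / M) * Real.sinh t := by
    rw [Real.cosh_eq, Real.sinh_eq]; field_simp; ring
  rw [h1, h2] at key
  exact key

lemma onestep {q : ℕ} (A : Fin q → Fin q → ℝ≥0) (Amax V : ℝ) (μstar : Fin q → ℝ)
    (hM : 0 < Amax) (hA₁ : ∀ x y, (A x y : ℝ) ≤ Amax)
    (hμ0 : ∀ x, 0 ≤ μstar x) (hμ1 : ∑ x, μstar x = 1)
    (hV0 : 0 ≤ V) (hVM : V ≤ Amax)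
    (hμV : ∀ y : Fin q, (∑ x, μstar x * (A x y : ℝ)) ≥ V)
    (y : Fin q) (lam : ℝ) (hlam : 0 ≤ lam) :
    ∑ c, μstar c * Real.exp (lam * (V - (A c y : ℝ)))
      ≤ Real.exp (lam ^ 2 * Amax ^ 2 / 2) := by
  set t := lam * Amax with ht
  have hM' : Amax ≠ 0 := ne_of_gt hM
  have ht0 : 0 ≤ t := mul_nonneg hlam hM.le
  have hpt : ∀ c, Real.exp (lam * (V - (A c y : ℝ)))
      ≤ Real.cosh t + ((V - (A c y : ℝ)) / Amax) * Real.sinh t := by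
    intro c
    have hb : |V - (A c y : ℝ)| ≤ Amax := by
      rw [abs_le]
      constructor
      · have := hA₁ c y; linarith
      · have : (0:ℝ) ≤ (A c y : ℝ) := (A c y).coe_nonneg
        linarith
    have := ptwise Amax (V - (A c y : ℝ)) t hM hb ht0
    rwa [show t / Amax * (V - (A c y : ℝ)) = lam * (V - (A c y : ℝ)) by
      rw [ht]; field_simp] at this
  calc ∑ c, μstar c * Real.exp (lam * (V - (A c y : ℝ)))
      ≤ ∑ c, μstar c * (Real.cosh t + ((V - (A c y : ℝ)) / Amax) * Real.sinh t) := by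
        apply Finset.sum_le_sum
        intro c _
        exact mul_le_mul_of_nonneg_left (hpt c) (hμ0 c)
    _ = Real.cosh t + (∑ c, μstar c * (V - (A c y : ℝ))) * (Real.sinh t / Amax) := by
        rw [Finset.sum_congr rfl (fun c _ => by ring :
          ∀ c ∈ Finset.univ, μstar c * (Real.cosh t + ((V - (A c y : ℝ)) / Amax) * Real.sinh t)
            = μstar c * Real.cosh t + μstar c * (V - (A c y : ℝ)) * (Real.sinh t / Amax))]
        rw [Finset.sum_add_distrib, ← Finset.sum_mul, ← Finset.sum_mul, hμ1, one_mul]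
    _ ≤ Real.cosh t := by
        have hsum : (∑ c, μstar c * (V - (A c y : ℝ))) ≤ 0 := by
          have : (∑ c, μstar c * (V - (A c y : ℝ)))
              = V - ∑ c, μstar c * (A c y : ℝ) := by
            rw [Finset.sum_congr rfl (fun c _ => by ring :
              ∀ c ∈ Finset.univ, μstar c * (V - (A c y : ℝ))
                = μstar c * V - μstar c * (A c y : ℝ))]
            rw [Finset.sum_sub_distrib, ← Finset.sum_mul, hμ1, one_mul]
          have := hμV y
          linarith
        have hsh : 0 ≤ Real.sinh t / Amax := div_nonneg (Real.sinh_nonneg_iff.2 ht0) hM.le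
        nlinarith [mul_nonneg (neg_nonneg.2 hsum) hsh]
    _ ≤ Real.exp (t ^ 2 / 2) := Real.cosh_le_exp_half_sq t
    _ = Real.exp (lam ^ 2 * Amax ^ 2 / 2) := by rw [ht]; ring_nf

lemma keylem {q : ℕ} (A : Fin q → Fin q → ℝ≥0) (Amax V : ℝ) (μstar : Fin q → ℝ)
    (hq : 1 ≤ q) (hM : 0 < Amax) (hA₁ : ∀ x y, (A x y : ℝ) ≤ Amax)
    (hμ0 : ∀ x, 0 ≤ μstar x) (hμ1 : ∑ x, μstar x = 1)
    (hV0 : 0 ≤ V) (hVM : V ≤ Amax)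
    (hμV : ∀ y : Fin q, (∑ x, μstar x * (A x y : ℝ)) ≥ V)
    (lam : ℝ) (hlam : 0 ≤ lam) :
    ∀ (n : ℕ) (s : Fin n → (Fin n → Fin q) → Fin q),
      (∀ (i : Fin n) (x x' : Fin n → Fin q), (∀ j, j < i → x j = x' j) → s i x = s i x') →
      ∑ x : Fin n → Fin q, (∏ i, μstar (x i)) *
          Real.exp (lam * ∑ i, (V - (A (x i) (s i x) : ℝ)))
        ≤ Real.exp (lam ^ 2 * n * Amax ^ 2 / 2) := by
  intro n
  induction n with
  | zero =>
      intro s hs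
      simp
  | succ n ih =>
      intro s hs
      have c₀ : Fin q := ⟨0, hq⟩
      -- transport along the cons equivalence
      have hsum : ∑ x : Fin (n+1) → Fin q, (∏ i, μstar (x i)) *
            Real.exp (lam * ∑ i, (V - (A (x i) (s i x) : ℝ)))
          = ∑ p : Fin q × (Fin n → Fin q), (∏ i, μstar ((Fin.cons p.1 p.2 : Fin (n+1) → Fin q) i)) *
            Real.exp (lam * ∑ i, (V - (A ((Fin.cons p.1 p.2 : Fin (n+1) → Fin q) i) (s i ((Fin.cons p.1 p.2 : Fin (n+1) → Fin q))) : ℝ))) := by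
        symm
        apply Fintype.sum_bijective (fun p : Fin q × (Fin n → Fin q) => (Fin.cons p.1 p.2 : Fin (n+1) → Fin q))
        · constructor
          · rintro ⟨c, x⟩ ⟨c', x'⟩ h
            have h0 := congrFun h 0
            simp only [Fin.cons_zero] at h0
            have h1 : x = x' := by
              funext i
              have := congrFun h i.succ
              simpa using this
            simp [h0, h1]
          · intro x
            exact ⟨(x 0, Fin.tail x), Fin.cons_self_tail x⟩
        · intro p
          rfl
      rw [hsum, Fintype.sum_prod_type]
      -- the fixed first answer
      set y₀ : Fin q := s 0 (fun _ => c₀) with hy₀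
      have hfirst : ∀ (c : Fin q) (x' : Fin n → Fin q),
          s 0 (Fin.cons c x' : Fin (n+1) → Fin q) = y₀ := by
        intro c x'
        apply hs
        intro j hj
        exact absurd hj (by rw [Fin.lt_def]; simp)
      -- tail strategies satisfy the prefix condition
      have hs' : ∀ (c : Fin q) (i : Fin n) (x' x'' : Fin n → Fin q),
          (∀ j, j < i → x' j = x'' j) →
          s i.succ (Fin.cons c x' : Fin (n+1) → Fin q)
            = s i.succ (Fin.cons c x'' : Fin (n+1) → Fin q) := by
        intro c i x' x'' hagree
        apply hs
        intro j
        refine Fin.cases ?_ ?_ j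
        · intro _; simp only [Fin.cons_zero]
        · intro k hk
          simp only [Fin.cons_succ]
          exact hagree k (by rw [Fin.lt_def, Fin.val_succ, Fin.val_succ] at hk; rw [Fin.lt_def]; omega)
      -- factor each summand
      have key : ∀ (c : Fin q) (x' : Fin n → Fin q),
          (∏ i : Fin (n+1), μstar ((Fin.cons c x' : Fin (n+1) → Fin q) i)) *
            Real.exp (lam * ∑ i : Fin (n+1),
              (V - (A ((Fin.cons c x' : Fin (n+1) → Fin q) i)
                (s i (Fin.cons c x' : Fin (n+1) → Fin q)) : ℝ)))
          = (μstar c * Real.exp (lam * (V - (A c y₀ : ℝ)))) *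
            ((∏ i : Fin n, μstar (x' i)) * Real.exp (lam * ∑ i : Fin n,
              (V - (A (x' i) (s i.succ (Fin.cons c x' : Fin (n+1) → Fin q)) : ℝ)))) := by
        intro c x'
        rw [Fin.prod_univ_succ, Fin.sum_univ_succ]
        simp only [Fin.cons_zero, Fin.cons_succ, hfirst]
        rw [mul_add, Real.exp_add]
        ring
      set K : ℝ := Real.exp (lam ^ 2 * n * Amax ^ 2 / 2) with hK
      have hK0 : 0 ≤ K := (Real.exp_pos _).le
      have step1 : ∀ c : Fin q,
          ∑ x' : Fin n → Fin q,
            (∏ i : Fin (n+1), μstar ((Fin.cons c x' : Fin (n+1) → Fin q) i)) *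
              Real.exp (lam * ∑ i : Fin (n+1),
                (V - (A ((Fin.cons c x' : Fin (n+1) → Fin q) i)
                  (s i (Fin.cons c x' : Fin (n+1) → Fin q)) : ℝ)))
          ≤ (μstar c * Real.exp (lam * (V - (A c y₀ : ℝ)))) * K := by
        intro c
        rw [Finset.sum_congr rfl (fun x' _ => key c x'), ← Finset.mul_sum]
        apply mul_le_mul_of_nonneg_left
        · exact ih (fun i x' => s i.succ (Fin.cons c x' : Fin (n+1) → Fin q)) (hs' c)
        · exact mul_nonneg (hμ0 c) (Real.exp_pos _).le
      calc ∑ c : Fin q, ∑ x' : Fin n → Fin q,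
            (∏ i : Fin (n+1), μstar ((Fin.cons c x' : Fin (n+1) → Fin q) i)) *
              Real.exp (lam * ∑ i : Fin (n+1),
                (V - (A ((Fin.cons c x' : Fin (n+1) → Fin q) i)
                  (s i (Fin.cons c x' : Fin (n+1) → Fin q)) : ℝ)))
          ≤ ∑ c : Fin q, (μstar c * Real.exp (lam * (V - (A c y₀ : ℝ)))) * K :=
            Finset.sum_le_sum (fun c _ => step1 c)
        _ = (∑ c : Fin q, μstar c * Real.exp (lam * (V - (A c y₀ : ℝ)))) * K := by
            rw [Finset.sum_mul]
        _ ≤ Real.exp (lam ^ 2 * Amax ^ 2 / 2) * K := by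
            apply mul_le_mul_of_nonneg_right _ hK0
            exact onestep A Amax V μstar hM hA₁ hμ0 hμ1 hV0 hVM hμV y₀ lam hlam
        _ = Real.exp (lam ^ 2 * (n + 1 : ℕ) * Amax ^ 2 / 2) := by
            rw [hK, ← Real.exp_add]
            congr 1
            push_cast
            ring

/-- Linear advice lower bound for repeated matrix games (Theorem 3):
if a randomized algorithm reading `b` bits of advice has expected cost at most
`(V − ε)·n` on every input, where `V` is guaranteed as a lower bound by the mixed row
strategy `μ*`, then `b ≥ ε²·n / (2·ln 2·‖A‖∞²)`. -/
theorem rmg_advice_lower_bound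
    {q n b : ℕ} (hq : 1 ≤ q) (hn : 1 ≤ n)
    (A : Fin q → Fin q → ℝ≥0) (Amax V ε : ℝ)
    (hA₁ : ∀ x y, (A x y : ℝ) ≤ Amax) (hA₂ : ∃ x y, (A x y : ℝ) = Amax)
    (μstar : Fin q → ℝ) (hμ0 : ∀ x, 0 ≤ μstar x) (hμ1 : ∑ x, μstar x = 1)
    (hμV : ∀ y : Fin q, (∑ x, μstar x * (A x y : ℝ)) ≥ V)
    (hε0 : 0 < ε) (hεV : ε ≤ V)
    (μ : AdviceAlg n q b → ℝ) (hμalg0 : ∀ a, 0 ≤ μ a) (hμalg1 : ∑ a, μ a = 1)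
    (hperf : ∀ x : Fin n → Fin q,
      (∑ alg, μ alg * ∑ i, (A (x i) (alg.2 (alg.1 x) i (fun j => x j.1)) : ℝ))
        ≤ (V - ε) * n) :
    (b : ℝ) ≥ ε ^ 2 * n / (2 * Real.log 2 * Amax ^ 2) := by
  classical
  have y0 : Fin q := ⟨0, hq⟩
  have hV0 : (0:ℝ) ≤ V := le_trans hε0.le hεV
  have hVM : V ≤ Amax := by
    have h1 : V ≤ ∑ x, μstar x * (A x y0 : ℝ) := hμV y0
    have h2 : ∑ x, μstar x * (A x y0 : ℝ) ≤ ∑ x, μstar x * Amax :=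
      Finset.sum_le_sum (fun x _ => mul_le_mul_of_nonneg_left (hA₁ x y0) (hμ0 x))
    rw [← Finset.sum_mul, hμ1, one_mul] at h2
    linarith
  have hM : 0 < Amax := lt_of_lt_of_le hε0 (le_trans hεV hVM)
  set lam : ℝ := ε / Amax ^ 2 with hlam_def
  have hlam : 0 ≤ lam := by positivity
  set w : (Fin n → Fin q) → ℝ := fun x => ∏ i, μstar (x i) with hw
  have hw0 : ∀ x, 0 ≤ w x := fun x => Finset.prod_nonneg (fun i _ => hμ0 _)
  have hw1 : ∑ x : Fin n → Fin q, w x = 1 := by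
    rw [hw]
    have h := Finset.prod_univ_sum (fun _ : Fin n => (Finset.univ : Finset (Fin q)))
      (fun _ c => μstar c)
    rw [Fintype.piFinset_univ] at h
    rw [← h]
    simp [hμ1]
  set Z : AdviceAlg n q b → Fin (2 ^ b) → (Fin n → Fin q) → ℝ :=
    fun alg a x => ∑ i, (V - (A (x i) (alg.2 a i (fun j => x j.1)) : ℝ)) with hZ
  have hZphi : ∀ x : Fin n → Fin q, ε * n ≤ ∑ alg, μ alg * Z alg (alg.1 x) x := by
    intro x
    have hterm : ∀ alg : AdviceAlg n q b, μ alg * Z alg (alg.1 x) x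
        = μ alg * (V * n) - μ alg * ∑ i, (A (x i) (alg.2 (alg.1 x) i (fun j => x j.1)) : ℝ) := by
      intro alg
      simp only [hZ]
      rw [Finset.sum_sub_distrib, Finset.sum_const, Finset.card_univ, Fintype.card_fin,
        nsmul_eq_mul]
      ring
    have heq : ∑ alg, μ alg * Z alg (alg.1 x) x
        = V * n - ∑ alg, μ alg * ∑ i, (A (x i) (alg.2 (alg.1 x) i (fun j => x j.1)) : ℝ) := by
      rw [Finset.sum_congr rfl (fun alg _ => hterm alg), Finset.sum_sub_distrib,
        ← Finset.sum_mul, hμalg1, one_mul]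
    rw [heq]
    have := hperf x
    linarith
  set P : AdviceAlg n q b × (Fin n → Fin q) → ℝ := fun p => μ p.1 * w p.2 with hP
  have hP0 : ∀ p, 0 ≤ P p := fun p => mul_nonneg (hμalg0 _) (hw0 _)
  have hP1 : ∑ p, P p = 1 := by
    rw [hP, Fintype.sum_prod_type]
    rw [Finset.sum_congr rfl (fun alg _ => by rw [← Finset.mul_sum, hw1, mul_one] :
      ∀ alg ∈ Finset.univ, ∑ x : Fin n → Fin q, μ alg * w x = μ alg)]
    exact hμalg1
  have hT : ε * n ≤ ∑ p : AdviceAlg n q b × (Fin n → Fin q), P p * Z p.1 (p.1.1 p.2) p.2 := by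
    calc ε * n = ∑ x : Fin n → Fin q, w x * (ε * n) := by
          rw [← Finset.sum_mul, hw1, one_mul]
      _ ≤ ∑ x : Fin n → Fin q, w x * ∑ alg, μ alg * Z alg (alg.1 x) x :=
          Finset.sum_le_sum fun x _ => mul_le_mul_of_nonneg_left (hZphi x) (hw0 x)
      _ = ∑ p : AdviceAlg n q b × (Fin n → Fin q), P p * Z p.1 (p.1.1 p.2) p.2 := by
          rw [Fintype.sum_prod_type, Finset.sum_comm]
          apply Finset.sum_congr rfl
          intro x _
          rw [Finset.mul_sum]
          apply Finset.sum_congr rfl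
          intro alg _
          simp only [hP]
          ring
  have hJ : Real.exp (lam * (ε * n))
      ≤ ∑ p : AdviceAlg n q b × (Fin n → Fin q), P p * Real.exp (lam * Z p.1 (p.1.1 p.2) p.2) := by
    have hmono : Real.exp (lam * (ε * n))
        ≤ Real.exp (lam * ∑ p : AdviceAlg n q b × (Fin n → Fin q), P p * Z p.1 (p.1.1 p.2) p.2) :=
      Real.exp_le_exp.2 (mul_le_mul_of_nonneg_left hT hlam)
    refine hmono.trans ?_
    have hjen := convexOn_exp.map_sum_le (t := Finset.univ) (w := P)
      (p := fun p : AdviceAlg n q b × (Fin n → Fin q) => lam * Z p.1 (p.1.1 p.2) p.2)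
      (fun i _ => hP0 i) hP1 (fun i _ => Set.mem_univ _)
    simp only [smul_eq_mul] at hjen
    refine le_trans (le_of_eq ?_) hjen
    congr 1
    rw [Finset.mul_sum]
    apply Finset.sum_congr rfl
    intro p _
    ring
  have hkey : ∀ (alg : AdviceAlg n q b) (a : Fin (2 ^ b)),
      ∑ x : Fin n → Fin q, w x * Real.exp (lam * Z alg a x)
        ≤ Real.exp (lam ^ 2 * n * Amax ^ 2 / 2) := by
    intro alg a
    have h := keylem A Amax V μstar hq hM hA₁ hμ0 hμ1 hV0 hVM hμV lam hlam n
      (fun i x => alg.2 a i (fun j => x j.1)) ?_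
    · simpa only [hw, hZ] using h
    · intro i x x' hag
      exact congrArg (alg.2 a i) (funext fun j => hag j.1 j.2)
  have hfinal : Real.exp (lam * (ε * n))
      ≤ (2:ℝ) ^ b * Real.exp (lam ^ 2 * n * Amax ^ 2 / 2) := by
    refine hJ.trans ?_
    calc ∑ p : AdviceAlg n q b × (Fin n → Fin q), P p * Real.exp (lam * Z p.1 (p.1.1 p.2) p.2)
        ≤ ∑ p : AdviceAlg n q b × (Fin n → Fin q),
            P p * ∑ a : Fin (2 ^ b), Real.exp (lam * Z p.1 a p.2) := by
          apply Finset.sum_le_sum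
          intro p _
          apply mul_le_mul_of_nonneg_left _ (hP0 p)
          exact Finset.single_le_sum
            (f := fun a : Fin (2 ^ b) => Real.exp (lam * Z p.1 a p.2))
            (fun a _ => (Real.exp_pos _).le) (Finset.mem_univ (p.1.1 p.2))
      _ = ∑ alg, μ alg * ∑ a : Fin (2 ^ b), ∑ x : Fin n → Fin q,
            w x * Real.exp (lam * Z alg a x) := by
          rw [Fintype.sum_prod_type]
          apply Finset.sum_congr rfl
          intro alg _
          simp only [hP, Finset.mul_sum]
          rw [Finset.sum_comm]
          exact Finset.sum_congr rfl fun a _ => Finset.sum_congr rfl fun x _ => by ring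
      _ ≤ ∑ alg, μ alg * ∑ _a : Fin (2 ^ b), Real.exp (lam ^ 2 * n * Amax ^ 2 / 2) := by
          apply Finset.sum_le_sum
          intro alg _
          exact mul_le_mul_of_nonneg_left
            (Finset.sum_le_sum fun a _ => hkey alg a) (hμalg0 alg)
      _ = (2:ℝ) ^ b * Real.exp (lam ^ 2 * n * Amax ^ 2 / 2) := by
          rw [Finset.sum_const, Finset.card_univ, Fintype.card_fin, nsmul_eq_mul,
            ← Finset.sum_mul, hμalg1, one_mul]
          push_cast
          ring
  have hlog : lam * (ε * n) ≤ b * Real.log 2 + lam ^ 2 * n * Amax ^ 2 / 2 := by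
    have h2 : (0:ℝ) < (2:ℝ) ^ b := by positivity
    have hl := Real.log_le_log (Real.exp_pos _) hfinal
    rw [Real.log_exp, Real.log_mul (ne_of_gt h2) (ne_of_gt (Real.exp_pos _)),
      Real.log_pow, Real.log_exp] at hl
    exact_mod_cast hl
  have hlog2 : 0 < Real.log 2 := Real.log_pos (by norm_num)
  rw [ge_iff_le, div_le_iff₀ (by positivity)]
  rw [hlam_def] at hlog
  have h1 : ε / Amax ^ 2 * (ε * n) = ε ^ 2 * n / Amax ^ 2 := by
    field_simp
  have h2 : (ε / Amax ^ 2) ^ 2 * n * Amax ^ 2 / 2 = ε ^ 2 * n / Amax ^ 2 / 2 := by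
    field_simp
  rw [h1, h2] at hlog
  have hS : ε ^ 2 * n / Amax ^ 2 ≤ 2 * (b * Real.log 2) := by linarith
  calc ε ^ 2 * n = ε ^ 2 * n / Amax ^ 2 * Amax ^ 2 := by field_simp
    _ ≤ 2 * (b * Real.log 2) * Amax ^ 2 :=
        mul_le_mul_of_nonneg_right hS (by positivity)
    _ = b * (2 * Real.log 2 * Amax ^ 2) := by ring
end
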